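/- arXiv:gr-qc/9403029 — 5 statements merged into one kernel-verified Lean document; each statement's English description precedes it below -/
import Mathlib

section
/- If \(\omega_0 : \mathbb{R} \times (0,\infty) \to \mathbb{R}\) satisfies \(\omega_0(x,\rho) = \beta/\sqrt{x^2+\rho^2} + O(1/(x^2+\rho^2))\) as \(x^2+\rho^2 \to \infty\), then for any \(L > 0\) the series \(\omega(x,\rho) = \omega_0(x,\rho) + \sum_{n\neq 0}\left(\omega_0(x+nL,\rho) - \frac{\beta}{L|n|}\right)\) converges absolutely at every point \((x,\rho)\) where all translates \(\omega_0(x+nL,\rho)\) are defined, and the resulting function satisfies \(\omega(x+L,\rho)=\omega(x,\rho)\). -/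
open Filter Topology

private lemma hasSum_telescope_aux (g : ℕ → ℝ)
    (hs : Summable (fun n => g (n + 1) - g n))
    (hlim : Tendsto g atTop (𝓝 0)) :
    HasSum (fun n => g (n + 1) - g n) (- g 0) := by
  have h1 := hs.hasSum
  have h2 := h1.tendsto_sum_nat
  have h3 : Tendsto (fun N => ∑ i ∈ Finset.range N, (g (i + 1) - g i)) atTop
      (𝓝 (0 - g 0)) := by
    simp only [Finset.sum_range_sub]
    exact hlim.sub_const (g 0)
  have h4 := tendsto_nhds_unique h2 h3
  rw [h4] at h1
  simpa using h1

set_option maxHeartbeats 2000000 in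
/-- Theorem 1 of the paper: if `ω₀(x,ρ) = β/√(x²+ρ²) + O(1/(x²+ρ²))` at infinity,
then for any period `L > 0` the series
`ω(x,ρ) = ω₀(x,ρ) + ∑_{n≠0} (ω₀(x+nL,ρ) - β/(L|n|))`
converges absolutely at every point with `ρ > 0`, and the resulting function is
periodic in `x` with period `L`. -/
theorem periodic_series_converges_and_periodic
    (ω₀ : ℝ → ℝ → ℝ) (β L C R : ℝ) (hL : 0 < L) (hC : 0 < C) (hR : 0 < R)
    (hasym : ∀ x ρ : ℝ, 0 < ρ → R ^ 2 ≤ x ^ 2 + ρ ^ 2 →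
      |ω₀ x ρ - β / Real.sqrt (x ^ 2 + ρ ^ 2)| ≤ C / (x ^ 2 + ρ ^ 2)) :
    ∀ x ρ : ℝ, 0 < ρ →
      Summable (fun n : {n : ℤ // n ≠ 0} =>
        |ω₀ (x + (n : ℤ) * L) ρ - β / (L * |(n : ℤ)|)|) ∧
      (fun x' => ω₀ x' ρ + ∑' n : {n : ℤ // n ≠ 0},
          (ω₀ (x' + (n : ℤ) * L) ρ - β / (L * |(n : ℤ)|))) (x + L)
        = (fun x' => ω₀ x' ρ + ∑' n : {n : ℤ // n ≠ 0},
          (ω₀ (x' + (n : ℤ) * L) ρ - β / (L * |(n : ℤ)|))) x := by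
  intro x ρ hρ
  -- The general term of the series at base point y.
  set t : ℝ → {n : ℤ // n ≠ 0} → ℝ :=
    fun y n => ω₀ (y + ((n : ℤ) : ℝ) * L) ρ - β / (L * ((|(n : ℤ)| : ℤ) : ℝ)) with ht
  -- Key summability estimate at an arbitrary base point y.
  have key : ∀ y : ℝ, Summable (t y) := by
    intro y
    set K : ℝ := (4 * C + 2 * |β| * (|y| + ρ)) / L ^ 2 with hK
    have hy0 : (0:ℝ) ≤ |y| := abs_nonneg y
    have est : ∀ n : ℤ, n ≠ 0 → 2 * (|y| + ρ + R) ≤ L * |(n : ℝ)| →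
        |ω₀ (y + (n : ℝ) * L) ρ - β / (L * |(n : ℝ)|)| ≤ K / (n : ℝ) ^ 2 := by
      intro n hn hM
      have hn' : ((n : ℝ)) ≠ 0 := Int.cast_ne_zero.mpr hn
      set m : ℝ := L * |(n : ℝ)| with hm
      set u : ℝ := y + (n : ℝ) * L with hu
      have hmpos : 0 < m := mul_pos hL (abs_pos.mpr hn')
      have hyhalf : |y| + ρ + R ≤ m / 2 := by linarith
      have hnl : |(n : ℝ) * L| = m := by
        rw [abs_mul, abs_of_pos hL]; ring
      have h1 : m ≤ |u| + |y| := by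
        rw [← hnl]
        calc |(n : ℝ) * L| = |u - y| := by rw [hu]; ring_nf
          _ ≤ |u| + |y| := by
              simpa [sub_eq_add_neg] using abs_add_le u (-y)
      have humlb : m - |y| ≤ |u| := by linarith
      have huhalf : m / 2 ≤ |u| := by linarith
      set s : ℝ := Real.sqrt (u ^ 2 + ρ ^ 2) with hs
      have hsu : |u| ≤ s := by
        rw [hs]
        calc |u| = Real.sqrt (u ^ 2) := (Real.sqrt_sq_eq_abs u).symm
          _ ≤ Real.sqrt (u ^ 2 + ρ ^ 2) :=
              Real.sqrt_le_sqrt (by nlinarith [sq_nonneg ρ])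
      have hshalf : m / 2 ≤ s := huhalf.trans hsu
      have hspos : 0 < s := lt_of_lt_of_le (by linarith) hshalf
      have hsub : s ≤ |u| + ρ := by
        rw [hs]
        calc Real.sqrt (u ^ 2 + ρ ^ 2) ≤ Real.sqrt ((|u| + ρ) ^ 2) :=
              Real.sqrt_le_sqrt (by nlinarith [sq_abs u, abs_nonneg u, hρ.le])
          _ = |u| + ρ := Real.sqrt_sq (by positivity)
      have huub : |u| ≤ m + |y| := by
        rw [← hnl]
        calc |u| = |y + (n : ℝ) * L| := by rw [hu]
          _ ≤ |y| + |(n : ℝ) * L| := abs_add_le _ _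
          _ = |(n : ℝ) * L| + |y| := by ring
      have hsm : |s - m| ≤ |y| + ρ := abs_sub_le_iff.mpr ⟨by linarith, by linarith⟩
      have hRs : R ≤ s := by linarith
      have hsq : s ^ 2 = u ^ 2 + ρ ^ 2 := Real.sq_sqrt (by positivity)
      have hR2 : R ^ 2 ≤ u ^ 2 + ρ ^ 2 := by nlinarith
      have hA : |ω₀ u ρ - β / s| ≤ C / (u ^ 2 + ρ ^ 2) := by
        have := hasym u ρ hρ hR2
        rwa [← hs] at this
      have hA2 : C / (u ^ 2 + ρ ^ 2) ≤ 4 * C / m ^ 2 := by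
        rw [← hsq]
        have h3 : (m / 2) ^ 2 ≤ s ^ 2 := by nlinarith
        have h4 : C / s ^ 2 ≤ C / ((m / 2) ^ 2) :=
          div_le_div_of_nonneg_left hC.le (by positivity) h3
        have h5 : C / ((m / 2) ^ 2) = 4 * C / m ^ 2 := by
          rw [div_eq_div_iff (by positivity) (by positivity)]; ring
        linarith
      have hB : |β / s - β / m| ≤ 2 * |β| * (|y| + ρ) / m ^ 2 := by
        have he : β / s - β / m = β * (m - s) / (s * m) := by
          field_simp
        rw [he, abs_div, abs_mul, abs_of_pos (mul_pos hspos hmpos)]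
        have h5 : |β| * |m - s| ≤ |β| * (|y| + ρ) := by
          apply mul_le_mul_of_nonneg_left _ (abs_nonneg β)
          rw [abs_sub_comm]; exact hsm
        have h6 : (m / 2) * m ≤ s * m := by nlinarith
        calc |β| * |m - s| / (s * m) ≤ |β| * (|y| + ρ) / ((m / 2) * m) :=
              div_le_div₀ (by positivity) h5 (by positivity) h6
          _ = 2 * |β| * (|y| + ρ) / m ^ 2 := by
              rw [div_eq_div_iff (by positivity) (by positivity)]; ring
      have hm2 : m ^ 2 = L ^ 2 * (n : ℝ) ^ 2 := by
        rw [hm, mul_pow, sq_abs]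
      calc |ω₀ (y + (n : ℝ) * L) ρ - β / (L * |(n : ℝ)|)|
          = |ω₀ u ρ - β / m| := by rw [← hu, ← hm]
        _ ≤ |ω₀ u ρ - β / s| + |β / s - β / m| := abs_sub_le _ _ _
        _ ≤ 4 * C / m ^ 2 + 2 * |β| * (|y| + ρ) / m ^ 2 :=
            add_le_add (hA.trans hA2) hB
        _ = K / (n : ℝ) ^ 2 := by
            rw [hK, hm2, ← add_div, div_div]
    -- the majorant is summable
    have hmaj : Summable (fun n : {n : ℤ // n ≠ 0} => K / ((n : ℤ) : ℝ) ^ 2) := by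
      have h1 : Summable (fun n : ℤ => K * (1 / (n : ℝ) ^ 2)) :=
        (Real.summable_one_div_int_pow.mpr one_lt_two).mul_left K
      have h2 := h1.subtype {n : ℤ | n ≠ 0}
      apply Summable.congr h2
      intro n
      simp [mul_one_div, div_eq_mul_inv]
    apply Summable.of_norm_bounded_eventually hmaj
    rw [Filter.eventually_cofinite]
    set N : ℤ := ⌈2 * (|y| + ρ + R) / L⌉ with hN
    apply Set.Finite.subset
      (Set.Finite.preimage Subtype.val_injective.injOn
        (Set.finite_Icc (-N) N))
    intro n hn
    simp only [Set.mem_setOf_eq, Real.norm_eq_abs] at hn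
    have hbig : ¬ (2 * (|y| + ρ + R) ≤ L * |((n : ℤ) : ℝ)|) := by
      intro h
      apply hn
      have := est (n : ℤ) n.2 h
      simpa [ht, Int.cast_abs] using this
    push_neg at hbig
    have h7 : |((n : ℤ) : ℝ)| < 2 * (|y| + ρ + R) / L := by
      rw [lt_div_iff₀ hL]
      linarith [hbig]
    have h8 : |((n : ℤ) : ℝ)| ≤ (N : ℝ) := h7.le.trans (Int.le_ceil _)
    have h9 : |(n : ℤ)| ≤ N := by
      have : ((|(n : ℤ)| : ℤ) : ℝ) ≤ (N : ℝ) := by rwa [Int.cast_abs]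
      exact_mod_cast this
    simp only [Set.mem_preimage, Set.mem_Icc]
    exact abs_le.mp h9
  constructor
  · exact (key x).abs
  -- periodicity
  show ω₀ (x + L) ρ + ∑' n, t (x + L) n = ω₀ x ρ + ∑' n, t x n
  set a : ℤ → ℝ := fun k => ω₀ (x + (k : ℝ) * L) ρ with ha
  set d : ℤ → ℝ := fun k => a (k + 1) - a k with hd
  have ht1 : Summable (t (x + L)) := key (x + L)
  have ht0 : Summable (t x) := key x
  have hdiff : ∀ n : {n : ℤ // n ≠ 0}, t (x + L) n - t x n = d (n : ℤ) := by
    intro n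
    simp only [ht, hd, ha]
    push_cast
    ring_nf
  have hsubS : Summable (fun n : {n : ℤ // n ≠ 0} => d (n : ℤ)) :=
    ((ht1.sub ht0).congr hdiff)
  have hindic : Summable (Set.indicator {n : ℤ | n ≠ 0} d) := by
    rw [← summable_subtype_iff_indicator]
    exact hsubS
  set F : ℤ → ℝ := Set.indicator {n : ℤ | n ≠ 0} d with hF
  have hF0 : F 0 = 0 := by simp [hF]
  have hFne : ∀ k : ℤ, k ≠ 0 → F k = d k := by
    intro k hk; simp [hF, hk]
  -- limit of the auxiliary sequence c
  have hclim : Tendsto (fun k : ℕ => β / (L * ((k : ℝ) + 1))) atTop (𝓝 0) := by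
    apply Tendsto.div_atTop tendsto_const_nhds
    apply Tendsto.const_mul_atTop hL
    exact tendsto_atTop_add_const_right _ 1 tendsto_natCast_atTop_atTop
  -- limits of a at ±∞
  have hposlim : Tendsto (fun k : ℕ => a ((k : ℤ) + 1)) atTop (𝓝 0) := by
    set e : ℕ → {n : ℤ // n ≠ 0} := fun k => ⟨(k : ℤ) + 1, by positivity⟩ with heast
    have he : Function.Injective e := by
      intro i j hij
      have : (i : ℤ) + 1 = (j : ℤ) + 1 := congrArg Subtype.val hij
      omega
    have h1 : Tendsto (fun k : ℕ => t x (e k)) atTop (𝓝 0) := by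
      have := (ht0.tendsto_cofinite_zero).comp he.tendsto_cofinite
      rwa [Nat.cofinite_eq_atTop] at this
    have h2 : Tendsto (fun k : ℕ => t x (e k) + β / (L * ((k : ℝ) + 1))) atTop
        (𝓝 (0 + 0)) := h1.add hclim
    rw [add_zero] at h2
    apply h2.congr
    intro k
    show ω₀ (x + (((k : ℤ) + 1 : ℤ) : ℝ) * L) ρ - β / (L * ((|(k : ℤ) + 1| : ℤ) : ℝ))
        + β / (L * ((k : ℝ) + 1)) = a ((k : ℤ) + 1)
    rw [abs_of_pos (by positivity : (0:ℤ) < (k : ℤ) + 1), ha]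
    push_cast
    ring_nf
  have hneglim : Tendsto (fun k : ℕ => a (-((k : ℤ) + 1))) atTop (𝓝 0) := by
    set e : ℕ → {n : ℤ // n ≠ 0} := fun k => ⟨-((k : ℤ) + 1), by omega⟩ with hest
    have he : Function.Injective e := by
      intro i j hij
      have : -((i : ℤ) + 1) = -((j : ℤ) + 1) := congrArg Subtype.val hij
      omega
    have h1 : Tendsto (fun k : ℕ => t x (e k)) atTop (𝓝 0) := by
      have := (ht0.tendsto_cofinite_zero).comp he.tendsto_cofinite
      rwa [Nat.cofinite_eq_atTop] at this
    have h2 : Tendsto (fun k : ℕ => t x (e k) + β / (L * ((k : ℝ) + 1))) atTop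
        (𝓝 (0 + 0)) := h1.add hclim
    rw [add_zero] at h2
    apply h2.congr
    intro k
    show ω₀ (x + ((-((k : ℤ) + 1) : ℤ) : ℝ) * L) ρ
        - β / (L * ((|(-((k : ℤ) + 1))| : ℤ) : ℝ))
        + β / (L * ((k : ℝ) + 1)) = a (-((k : ℤ) + 1))
    rw [abs_of_neg (by omega : -((k : ℤ) + 1) < 0), ha]
    push_cast
    ring_nf
  -- positive-side telescoping
  have hposF : HasSum (fun k : ℕ => F (k : ℤ)) (- a 1) := by
    set g : ℕ → ℝ := fun k => a ((k : ℤ) + 1) with hg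
    have heq : ∀ k : ℕ, F ((k : ℤ) + 1) = g (k + 1) - g k := by
      intro k
      rw [hFne ((k : ℤ) + 1) (by positivity), hd, hg]
      push_cast
      ring_nf
    have hcomp : Summable (fun k : ℕ => F ((k : ℤ) + 1)) := by
      apply hindic.comp_injective (i := fun k : ℕ => (k : ℤ) + 1)
      intro i j hij
      have hij' : (i : ℤ) + 1 = (j : ℤ) + 1 := hij
      omega
    have hgs : Summable (fun k : ℕ => g (k + 1) - g k) := hcomp.congr heq
    have htel := hasSum_telescope_aux g hgs hposlim
    have h1 : HasSum (fun k : ℕ => F ((k : ℤ) + 1)) (- a 1) := by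
      have hfe : (fun k : ℕ => F ((k : ℤ) + 1)) = fun k => g (k + 1) - g k :=
        funext heq
      rw [hfe]
      have hg0 : g 0 = a 1 := by show a ((0:ℤ) + 1) = a 1; norm_num
      rw [← hg0]
      exact htel
    have hfe2 : (fun n : ℕ => F (((n + 1 : ℕ) : ℤ))) = fun k : ℕ => F ((k : ℤ) + 1) := by
      funext k
      congr 1
    have h2 := (hasSum_nat_add_iff (f := fun k : ℕ => F (k : ℤ)) 1).mp (hfe2 ▸ h1)
    simpa [hF0] using h2
  -- negative-side telescoping
  have hnegF : HasSum (fun k : ℕ => F (-((k : ℤ) + 1))) (a 0) := by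
    set g' : ℕ → ℝ := fun k => a (-(k : ℤ)) with hg'
    have heq' : ∀ k : ℕ, -F (-((k : ℤ) + 1)) = g' (k + 1) - g' k := by
      intro k
      rw [hFne _ (by omega), hd, hg']
      push_cast
      ring_nf
    have hcomp' : Summable (fun k : ℕ => F (-((k : ℤ) + 1))) := by
      apply hindic.comp_injective (i := fun k : ℕ => -((k : ℤ) + 1))
      intro i j hij
      have hij' : -((i : ℤ) + 1) = -((j : ℤ) + 1) := hij
      omega
    have hgs' : Summable (fun k : ℕ => g' (k + 1) - g' k) := hcomp'.neg.congr heq'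
    have hg'lim : Tendsto g' atTop (𝓝 0) := by
      rw [← Filter.tendsto_add_atTop_iff_nat 1]
      apply hneglim.congr
      intro k
      show a (-((k : ℤ) + 1)) = g' (k + 1)
      rw [hg']
      congr 1
    have htel' := hasSum_telescope_aux g' hgs' hg'lim
    have h1 : HasSum (fun k : ℕ => -F (-((k : ℤ) + 1))) (- a 0) := by
      have hfe : (fun k : ℕ => -F (-((k : ℤ) + 1))) = fun k => g' (k + 1) - g' k :=
        funext heq'
      rw [hfe]
      have hg0 : g' 0 = a 0 := by show a (-(0:ℤ)) = a 0; norm_num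
      rw [← hg0]
      exact htel'
    simpa using h1.neg
  have hFsum : HasSum F (- a 1 + a 0) := hposF.of_nat_of_neg_add_one hnegF
  have hT : (∑' n : {n : ℤ // n ≠ 0}, t (x + L) n) - ∑' n : {n : ℤ // n ≠ 0}, t x n
      = - a 1 + a 0 := by
    rw [← Summable.tsum_sub ht1 ht0]
    calc ∑' n : {n : ℤ // n ≠ 0}, (t (x + L) n - t x n)
        = ∑' n : {n : ℤ // n ≠ 0}, d (n : ℤ) := tsum_congr hdiff
      _ = ∑' n : ℤ, F n := tsum_subtype {n : ℤ | n ≠ 0} d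
      _ = - a 1 + a 0 := hFsum.tsum_eq
  have ha1 : a 1 = ω₀ (x + L) ρ := by
    show ω₀ (x + ((1 : ℤ) : ℝ) * L) ρ = ω₀ (x + L) ρ
    norm_num
  have ha0 : a 0 = ω₀ x ρ := by
    show ω₀ (x + ((0 : ℤ) : ℝ) * L) ρ = ω₀ x ρ
    norm_num
  rw [← ha1, ← ha0]
  linarith [hT]
end

section
/- Let \(M > 0\), \(L > 2M\), and \({\cal E}_0(x,\rho)=\frac{s_1+s_2-2M}{s_1+s_2+2M}\) with \(s_1=\sqrt{(x-M)^2+\rho^2}\), \(s_2=\sqrt{(x+M)^2+\rho^2}\). The infinite product \({\cal E}(x,\rho)={\cal E}_0(x,\rho)\prod_{n=1}^{\infty}{\cal E}_0(x+nL,\rho)\,{\cal E}_0(x-nL,\rho)\,e^{4M/(nL)}\) converges for all \((x,\rho)\) with \(\rho \ge 0\) except at the points \((\pm M + kL, 0)\), \(k\in\mathbb{Z}\), and satisfies \({\cal E}(x+L,\rho)={\cal E}(x,\rho)\). -/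
/-- The Schwarzschild Ernst potential in Weyl coordinates. -/
noncomputable def ernst0 (M x ρ : ℝ) : ℝ :=
  (Real.sqrt ((x - M) ^ 2 + ρ ^ 2) + Real.sqrt ((x + M) ^ 2 + ρ ^ 2) - 2 * M) /
  (Real.sqrt ((x - M) ^ 2 + ρ ^ 2) + Real.sqrt ((x + M) ^ 2 + ρ ^ 2) + 2 * M)

/-- The periodic Ernst potential: `ℰ = ℰ₀(x,ρ) ∏_{n≥1} ℰ₀(x+nL,ρ) ℰ₀(x-nL,ρ) e^{4M/(nL)}`. -/
noncomputable def ernstPeriodic (M L x ρ : ℝ) : ℝ :=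
  ernst0 M x ρ * ∏' n : ℕ,
    (ernst0 M (x + (n + 1) * L) ρ * ernst0 M (x - (n + 1) * L) ρ *
      Real.exp (4 * M / ((n + 1) * L)))

noncomputable def sfun (M ρ y : ℝ) : ℝ :=
  Real.sqrt ((y - M) ^ 2 + ρ ^ 2) + Real.sqrt ((y + M) ^ 2 + ρ ^ 2)

lemma sfun_lower (M ρ y : ℝ) : |y - M| + |y + M| ≤ sfun M ρ y := by
  unfold sfun
  gcongr <;>
  · rw [← Real.sqrt_sq_eq_abs]
    exact Real.sqrt_le_sqrt (by nlinarith [sq_nonneg ρ])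

lemma sqrt_aux (a ρ : ℝ) (hρ : 0 ≤ ρ) : Real.sqrt (a ^ 2 + ρ ^ 2) ≤ |a| + ρ := by
  have h1 : Real.sqrt (a ^ 2 + ρ ^ 2) ≤ Real.sqrt ((|a| + ρ) ^ 2) :=
    Real.sqrt_le_sqrt (by nlinarith [abs_nonneg a, sq_abs a])
  rwa [Real.sqrt_sq (by positivity)] at h1

lemma sfun_upper (M ρ y : ℝ) (hρ : 0 ≤ ρ) : sfun M ρ y ≤ |y - M| + |y + M| + 2 * ρ := by
  have h1 := sqrt_aux (y - M) ρ hρ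
  have h2 := sqrt_aux (y + M) ρ hρ
  unfold sfun; linarith

lemma abs_facts (M y : ℝ) (hM : 0 ≤ M) :
    2 * M ≤ |y - M| + |y + M| ∧ 2 * |y| ≤ |y - M| + |y + M| ∧
      |y - M| + |y + M| ≤ 2 * |y| + 2 * M := by
  have h1 : |(y + M) - (y - M)| ≤ |y + M| + |y - M| := abs_sub _ _
  have h2 : |(y - M) + (y + M)| ≤ |y - M| + |y + M| := abs_add_le _ _
  have h3 : |y - M| ≤ |y| + M := by
    calc |y - M| ≤ |y| + |M| := abs_sub _ _
    _ = |y| + M := by rw [abs_of_nonneg hM]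
  have h4 : |y + M| ≤ |y| + M := by
    calc |y + M| ≤ |y| + |M| := abs_add_le _ _
    _ = |y| + M := by rw [abs_of_nonneg hM]
  refine ⟨?_, ?_, by linarith⟩
  · calc 2 * M = |2 * M| := (abs_of_nonneg (by linarith)).symm
    _ = |(y + M) - (y - M)| := by ring_nf
    _ ≤ |y + M| + |y - M| := h1
    _ = |y - M| + |y + M| := by ring
  · calc 2 * |y| = |2 * y| := by rw [abs_mul]; norm_num
    _ = |(y - M) + (y + M)| := by ring_nf
    _ ≤ |y - M| + |y + M| := h2

lemma sfun_ge (M ρ y : ℝ) (hM : 0 ≤ M) : 2 * M ≤ sfun M ρ y ∧ 2 * |y| ≤ sfun M ρ y := by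
  obtain ⟨h1, h2, _⟩ := abs_facts M y hM
  exact ⟨h1.trans (sfun_lower M ρ y), h2.trans (sfun_lower M ρ y)⟩

lemma sfun_le (M ρ y : ℝ) (hM : 0 ≤ M) (hρ : 0 ≤ ρ) :
    sfun M ρ y ≤ 2 * |y| + 2 * M + 2 * ρ := by
  obtain ⟨_, _, h3⟩ := abs_facts M y hM
  linarith [sfun_upper M ρ y hρ]

lemma ernst0_eq (M ρ y : ℝ) (hM : 0 < M) :
    ernst0 M y ρ = 1 - 4 * M / (sfun M ρ y + 2 * M) := by
  have h : 0 < sfun M ρ y + 2 * M := by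
    have := (sfun_ge M ρ y hM.le).1
    linarith
  rw [ernst0, show Real.sqrt ((y - M) ^ 2 + ρ ^ 2) + Real.sqrt ((y + M) ^ 2 + ρ ^ 2)
      = sfun M ρ y from rfl]
  field_simp
  ring

lemma ernst0_nonneg (M ρ y : ℝ) (hM : 0 < M) : 0 ≤ ernst0 M y ρ := by
  have h1 := (sfun_ge M ρ y hM.le).1
  rw [ernst0]
  have : Real.sqrt ((y - M) ^ 2 + ρ ^ 2) + Real.sqrt ((y + M) ^ 2 + ρ ^ 2) = sfun M ρ y := rfl
  rw [this]
  apply div_nonneg <;> linarith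

lemma log_ernst0_est (M ρ y u A : ℝ) (hM : 0 < M) (hρ : 0 ≤ ρ) (hA : 0 ≤ A)
    (hu8 : 8 * M ≤ u) (huA : 2 * A ≤ u) (hylo : u - A ≤ |y|) (hyhi : |y| ≤ u + A) :
    |Real.log (ernst0 M y ρ) + 2 * M / u| ≤ (32 * M ^ 2 + 2 * M * (2 * A + 4 * M + 2 * ρ)) / u ^ 2 := by
  have hu : 0 < u := by linarith
  set s := sfun M ρ y with hs
  have hs1 : 2 * |y| ≤ s := (sfun_ge M ρ y hM.le).2
  have hs2 : s ≤ 2 * |y| + 2 * M + 2 * ρ := sfun_le M ρ y hM.le hρ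
  have hsu : u ≤ s + 2 * M := by linarith
  have hspos : 0 < s + 2 * M := by linarith
  set t := 4 * M / (s + 2 * M) with ht
  have ht0 : 0 < t := div_pos (by linarith) hspos
  have ht4 : t ≤ 4 * M / u := by
    rw [ht]; gcongr
  have ht2 : t ≤ 1 / 2 := by
    refine ht4.trans ?_
    rw [div_le_iff₀ hu]; linarith
  have hE : ernst0 M y ρ = 1 - t := ernst0_eq M ρ y hM
  clear_value t
  clear_value s
  -- |t + log (1 - t)| ≤ 2 t^2
  have hlog : |t + Real.log (1 - t)| ≤ 2 * t ^ 2 := by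
    have h := Real.abs_log_sub_add_sum_range_le (x := t)
      (by rw [abs_of_pos ht0]; linarith) 1
    simp only [Finset.sum_range_one, pow_one, Nat.cast_zero, zero_add, div_one] at h
    have habs : |t| = t := abs_of_pos ht0
    rw [habs] at h
    refine h.trans ?_
    rw [div_le_iff₀ (by linarith)]
    norm_num
    nlinarith [sq_nonneg t]
  -- |t - 2M/u| ≤ 2 M D / u^2
  have hD : |s + 2 * M - 2 * u| ≤ 2 * A + 4 * M + 2 * ρ := by
    rw [abs_le]; constructor <;> nlinarith
  have hdiff : |t - 2 * M / u| ≤ 2 * M * (2 * A + 4 * M + 2 * ρ) / u ^ 2 := by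
    have heq : t - 2 * M / u = 2 * M * (2 * u - (s + 2 * M)) / ((s + 2 * M) * u) := by
      rw [ht, div_sub_div _ _ hspos.ne' hu.ne']; ring
    rw [heq, abs_div, abs_of_pos (mul_pos hspos hu)]
    have hnum : |2 * M * (2 * u - (s + 2 * M))| ≤ 2 * M * (2 * A + 4 * M + 2 * ρ) := by
      rw [abs_mul, abs_of_pos (by linarith : (0:ℝ) < 2 * M)]
      have : |2 * u - (s + 2 * M)| = |s + 2 * M - 2 * u| := abs_sub_comm _ _
      rw [this]
      nlinarith [hD]
    refine div_le_div₀ (by positivity) hnum (by positivity) ?_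
    nlinarith
  -- combine
  have hkey : Real.log (ernst0 M y ρ) + 2 * M / u
      = (t + Real.log (1 - t)) + (2 * M / u - t) := by rw [hE]; ring
  rw [hkey]
  have h1 : |(t + Real.log (1 - t)) + (2 * M / u - t)|
      ≤ |t + Real.log (1 - t)| + |2 * M / u - t| := abs_add_le _ _
  have h2 : |2 * M / u - t| = |t - 2 * M / u| := abs_sub_comm _ _
  rw [h2] at h1
  have e1 : (4 * M / u) ^ 2 = 16 * M ^ 2 / u ^ 2 := by
    field_simp; ring
  have ht4' : t ^ 2 ≤ (4 * M / u) ^ 2 := pow_le_pow_left₀ ht0.le ht4 2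
  rw [e1] at ht4'
  have e2 : (32 * M ^ 2 + 2 * M * (2 * A + 4 * M + 2 * ρ)) / u ^ 2
      = 32 * M ^ 2 / u ^ 2 + 2 * M * (2 * A + 4 * M + 2 * ρ) / u ^ 2 := by ring
  rw [e2]
  refine h1.trans ((add_le_add hlog hdiff).trans ?_)
  have h3 : 2 * t ^ 2 ≤ 32 * M ^ 2 / u ^ 2 := by
    calc 2 * t ^ 2 ≤ 2 * (16 * M ^ 2 / u ^ 2) := by linarith
    _ = 32 * M ^ 2 / u ^ 2 := by ring
  exact add_le_add h3 le_rfl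

lemma summable_aux (M L x ρ : ℝ) (hM : 0 < M) (hL : 2 * M < L) (hρ : 0 ≤ ρ) :
    Summable (fun n : ℕ =>
      Real.log (ernst0 M (x + (n + 1) * L) ρ) + Real.log (ernst0 M (x - (n + 1) * L) ρ)
        + 4 * M / ((n + 1) * L)) := by
  have hL0 : 0 < L := by linarith
  set A := |x| with hA
  have hA0 : 0 ≤ A := abs_nonneg x
  set K := 32 * M ^ 2 + 2 * M * (2 * A + 4 * M + 2 * ρ) with hK
  obtain ⟨N, hN⟩ := exists_nat_ge ((8 * M + 2 * A) / L)
  have hbase : Summable (fun n : ℕ => 2 * K / L ^ 2 * (1 / ((n : ℝ) + 1) ^ 2)) := by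
    apply Summable.mul_left
    have h2 : Summable (fun n : ℕ => 1 / (n : ℝ) ^ 2) :=
      Real.summable_one_div_nat_pow.mpr one_lt_two
    refine ((summable_nat_add_iff 1).mpr h2).congr fun n => ?_
    push_cast
    ring
  apply Summable.of_norm_bounded_eventually_nat hbase
  filter_upwards [Filter.eventually_ge_atTop N] with n hn
  set u := ((n : ℝ) + 1) * L with hu
  have hun : 8 * M + 2 * A ≤ u := by
    have h1 : 8 * M + 2 * A ≤ (N : ℝ) * L := (div_le_iff₀ hL0).mp hN
    have h2 : (N : ℝ) ≤ (n : ℝ) + 1 := by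
      have : (N : ℝ) ≤ (n : ℝ) := Nat.cast_le.mpr hn
      linarith
    nlinarith
  have hu8 : 8 * M ≤ u := by linarith
  have huA : 2 * A ≤ u := by linarith
  have hupos : 0 < u := by linarith
  have hp := log_ernst0_est M ρ (x + u) u A hM hρ hA0 hu8 huA
    (by
      have := abs_sub_abs_le_abs_sub u (-x)
      rw [abs_neg, abs_of_pos hupos, sub_neg_eq_add] at this
      rw [add_comm x u]
      linarith)
    (by
      calc |x + u| ≤ |x| + |u| := abs_add_le _ _
      _ = u + A := by rw [abs_of_pos hupos]; ring)
  have hm := log_ernst0_est M ρ (x - u) u A hM hρ hA0 hu8 huA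
    (by
      have := abs_sub_abs_le_abs_sub u x
      rw [abs_of_pos hupos, abs_sub_comm u x] at this
      linarith)
    (by
      calc |x - u| ≤ |x| + |u| := abs_sub _ _
      _ = u + A := by rw [abs_of_pos hupos]; ring)
  rw [Real.norm_eq_abs]
  have key : Real.log (ernst0 M (x + u) ρ) + Real.log (ernst0 M (x - u) ρ) + 4 * M / u
      = (Real.log (ernst0 M (x + u) ρ) + 2 * M / u)
        + (Real.log (ernst0 M (x - u) ρ) + 2 * M / u) := by ring
  rw [key]
  have hn1 : ((n : ℝ) + 1) ≠ 0 := by positivity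
  have hfin : 2 * K / L ^ 2 * (1 / ((n : ℝ) + 1) ^ 2) = K / u ^ 2 + K / u ^ 2 := by
    rw [hu]
    field_simp
    ring
  rw [hfin]
  exact (abs_add_le _ _).trans (add_le_add hp hm)

lemma tendsto_log_ernst0 (M ρ : ℝ) (hM : 0 < M) (y : ℕ → ℝ)
    (hy : Filter.Tendsto (fun N => |y N|) Filter.atTop Filter.atTop) :
    Filter.Tendsto (fun N => Real.log (ernst0 M (y N) ρ)) Filter.atTop (nhds 0) := by
  have hs : Filter.Tendsto (fun N => sfun M ρ (y N) + 2 * M) Filter.atTop Filter.atTop := by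
    apply Filter.tendsto_atTop_mono (f := fun N => 2 * |y N|)
    · intro N
      have h1 := (sfun_ge M ρ (y N) hM.le).2
      linarith
    · exact hy.const_mul_atTop two_pos
  have ht : Filter.Tendsto (fun N => 4 * M / (sfun M ρ (y N) + 2 * M))
      Filter.atTop (nhds 0) := Filter.Tendsto.div_atTop tendsto_const_nhds hs
  have hE : Filter.Tendsto (fun N => ernst0 M (y N) ρ) Filter.atTop (nhds 1) := by
    have h := (tendsto_const_nhds (x := (1:ℝ)) (f := Filter.atTop (α := ℕ))).sub ht
    rw [sub_zero] at h
    refine h.congr fun N => ?_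
    exact (ernst0_eq M ρ (y N) hM).symm
  have hc : Filter.Tendsto Real.log (nhds 1) (nhds 0) := by
    have := (Real.continuousAt_log one_ne_zero).tendsto
    rwa [Real.log_one] at this
  exact hc.comp hE

lemma hasProd_zero_of_eq_zero {f : ℕ → ℝ} (n₀ : ℕ) (h : f n₀ = 0) : HasProd f 0 := by
  have hev : ∀ᶠ s : Finset ℕ in Filter.atTop, (0 : ℝ) = ∏ i ∈ s, f i := by
    filter_upwards [Filter.eventually_ge_atTop ({n₀} : Finset ℕ)] with s hs
    exact (Finset.prod_eq_zero (hs (Finset.mem_singleton_self n₀)) h).symm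
  exact Filter.Tendsto.congr' hev tendsto_const_nhds

lemma ernstPeriodic_eq_zero (M L x ρ : ℝ) (k : ℤ) (hk : ernst0 M (x + k * L) ρ = 0) :
    ernstPeriodic M L x ρ = 0 := by
  unfold ernstPeriodic
  rcases lt_trichotomy k 0 with h | h | h
  · rw [mul_eq_zero]; right
    set n := (-k - 1).toNat with hn
    have hcast : ((n : ℤ) : ℝ) = -(k : ℝ) - 1 := by
      rw [hn, Int.toNat_of_nonneg (by omega)]; push_cast; ring
    have harg : x - ((n : ℝ) + 1) * L = x + (k : ℝ) * L := by
      rw [show ((n : ℝ)) = ((n : ℤ) : ℝ) by push_cast; ring, hcast]; ring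
    refine (hasProd_zero_of_eq_zero n ?_).tprod_eq
    rw [harg, hk, mul_zero, zero_mul]
  · subst h
    rw [mul_eq_zero]; left
    simpa using hk
  · rw [mul_eq_zero]; right
    set n := (k - 1).toNat with hn
    have hcast : ((n : ℤ) : ℝ) = (k : ℝ) - 1 := by
      rw [hn, Int.toNat_of_nonneg (by omega)]; push_cast; ring
    have harg : x + ((n : ℝ) + 1) * L = x + (k : ℝ) * L := by
      rw [show ((n : ℝ)) = ((n : ℤ) : ℝ) by push_cast; ring, hcast]; ring
    refine (hasProd_zero_of_eq_zero n ?_).tprod_eq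
    rw [harg, hk, zero_mul, zero_mul]

lemma ernst0_pos (M ρ y : ℝ) (hM : 0 < M) (h : ernst0 M y ρ ≠ 0) : 0 < ernst0 M y ρ :=
  lt_of_le_of_ne (ernst0_nonneg M ρ y hM) (Ne.symm h)


/-- Theorems 1-2 of the paper for the Schwarzschild potential: for `L > 2M` the
infinite product defining the periodic Ernst potential converges (equivalently, the
series of logarithms with the convergence-generating constants `4M/(nL)` converges)
at every `(x,ρ)`, `ρ ≥ 0`, away from the translated horizon endpoints
`(±M + kL, 0)`, and the resulting function is `L`-periodic in `x`. -/
theorem ernstPeriodic_converges_and_periodic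
    (M L : ℝ) (hM : 0 < M) (hL : 2 * M < L) (x ρ : ℝ) (hρ : 0 ≤ ρ)
    (hreg : ¬ ∃ k : ℤ, ρ = 0 ∧ (x = M + k * L ∨ x = -M + k * L)) :
    Summable (fun n : ℕ =>
      Real.log (ernst0 M (x + (n + 1) * L) ρ) + Real.log (ernst0 M (x - (n + 1) * L) ρ)
        + 4 * M / ((n + 1) * L)) ∧
    Multipliable (fun n : ℕ =>
      ernst0 M (x + (n + 1) * L) ρ * ernst0 M (x - (n + 1) * L) ρ *
        Real.exp (4 * M / ((n + 1) * L))) ∧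
    ernstPeriodic M L (x + L) ρ = ernstPeriodic M L x ρ := by
  have hL0 : 0 < L := by linarith
  have hsum := summable_aux M L x ρ hM hL hρ
  have hmult : Multipliable (fun n : ℕ =>
      ernst0 M (x + (n + 1) * L) ρ * ernst0 M (x - (n + 1) * L) ρ *
        Real.exp (4 * M / ((n + 1) * L))) := by
    by_cases hz : ∃ n : ℕ, ernst0 M (x + ((n : ℝ) + 1) * L) ρ *
        ernst0 M (x - ((n : ℝ) + 1) * L) ρ * Real.exp (4 * M / (((n : ℝ) + 1) * L)) = 0
    · obtain ⟨n, hn⟩ := hz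
      exact ⟨0, hasProd_zero_of_eq_zero n hn⟩
    · push_neg at hz
      have hfe : (Real.exp ∘ fun n : ℕ =>
          Real.log (ernst0 M (x + (n + 1) * L) ρ) + Real.log (ernst0 M (x - (n + 1) * L) ρ)
            + 4 * M / ((n + 1) * L)) = (fun n : ℕ =>
          ernst0 M (x + (n + 1) * L) ρ * ernst0 M (x - (n + 1) * L) ρ *
            Real.exp (4 * M / ((n + 1) * L))) := by
        funext n
        have h1 : ernst0 M (x + ((n : ℝ) + 1) * L) ρ ≠ 0 := fun h => hz n (by rw [h, zero_mul, zero_mul])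
        have h2 : ernst0 M (x - ((n : ℝ) + 1) * L) ρ ≠ 0 := fun h => hz n (by rw [h, mul_zero, zero_mul])
        have p1 := ernst0_pos _ _ _ hM h1
        have p2 := ernst0_pos _ _ _ hM h2
        show Real.exp _ = _
        rw [Real.exp_add, Real.exp_add, Real.exp_log p1, Real.exp_log p2]
      exact ⟨_, hfe ▸ hsum.hasSum.rexp⟩
  refine ⟨hsum, hmult, ?_⟩
  by_cases hdeg : ∃ k : ℤ, ernst0 M (x + (k : ℝ) * L) ρ = 0
  · obtain ⟨k, hk⟩ := hdeg
    rw [ernstPeriodic_eq_zero M L x ρ k hk, ernstPeriodic_eq_zero M L (x + L) ρ (k - 1) ?_]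
    push_cast
    rw [show x + L + ((k : ℝ) - 1) * L = x + (k : ℝ) * L by ring]
    exact hk
  · push_neg at hdeg
    have hpos : ∀ k : ℤ, 0 < ernst0 M (x + (k : ℝ) * L) ρ := fun k =>
      ernst0_pos _ _ _ hM (hdeg k)
    have posp : ∀ n : ℕ, 0 < ernst0 M (x + ((n : ℝ) + 1) * L) ρ := by
      intro n
      have := hpos ((n : ℤ) + 1)
      rwa [show (((n : ℤ) + 1 : ℤ) : ℝ) = (n : ℝ) + 1 by push_cast; ring] at this
    have posp2 : ∀ n : ℕ, 0 < ernst0 M (x + ((n : ℝ) + 2) * L) ρ := by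
      intro n
      have := hpos ((n : ℤ) + 2)
      rwa [show (((n : ℤ) + 2 : ℤ) : ℝ) = (n : ℝ) + 2 by push_cast; ring] at this
    have posm : ∀ n : ℕ, 0 < ernst0 M (x - ((n : ℝ) + 1) * L) ρ := by
      intro n
      have := hpos (-((n : ℤ) + 1))
      rwa [show x + ((-((n : ℤ) + 1) : ℤ) : ℝ) * L = x - ((n : ℝ) + 1) * L by push_cast; ring] at this
    have posm0 : ∀ n : ℕ, 0 < ernst0 M (x - (n : ℝ) * L) ρ := by
      intro n
      have := hpos (-(n : ℤ))
      rwa [show x + ((-(n : ℤ) : ℤ) : ℝ) * L = x - (n : ℝ) * L by push_cast; ring] at this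
    set a : ℕ → ℝ := fun m => Real.log (ernst0 M (x + (m : ℝ) * L) ρ) with ha
    set b : ℕ → ℝ := fun m => Real.log (ernst0 M (x - (m : ℝ) * L) ρ) with hb
    set f : ℕ → ℝ := fun n => a (n + 1) + b (n + 1) + 4 * M / (((n : ℝ) + 1) * L) with hf
    set f' : ℕ → ℝ := fun n => a (n + 2) + b n + 4 * M / (((n : ℝ) + 1) * L) with hf'
    have hsf : Summable f := by
      refine (summable_aux M L x ρ hM hL hρ).congr fun n => ?_
      simp only [hf, ha, hb]
      push_cast
      ring
    have hsf' : Summable f' := by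
      refine (summable_aux M L (x + L) ρ hM hL hρ).congr fun n => ?_
      simp only [hf', ha, hb]
      push_cast
      rw [show x + L + ((n : ℝ) + 1) * L = x + ((n : ℝ) + 2) * L by ring,
        show x + L - ((n : ℝ) + 1) * L = x - (n : ℝ) * L by ring]
    have hdsum : HasSum (fun n => f n - f' n) ((∑' n, f n) - ∑' n, f' n) :=
      hsf.hasSum.sub hsf'.hasSum
    have hps : ∀ N : ℕ, ∑ n ∈ Finset.range N, (f n - f' n) = (a 1 - a (N + 1)) + (b N - b 0) := by
      intro N
      have hterm : ∀ n : ℕ, f n - f' n = (a (n + 1) - a (n + 1 + 1)) + (b (n + 1) - b n) := by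
        intro n
        simp only [hf, hf']
        rw [show n + 1 + 1 = n + 2 from rfl]
        ring
      rw [Finset.sum_congr rfl fun n _ => hterm n, Finset.sum_add_distrib,
        Finset.sum_range_sub' (fun i => a (i + 1)) N, Finset.sum_range_sub b N]
    have hya : Filter.Tendsto (fun N : ℕ => |x + ((N : ℝ) + 1) * L|) Filter.atTop Filter.atTop := by
      apply Filter.tendsto_atTop_mono (f := fun N : ℕ => (N : ℝ) * L - |x|)
      · intro N
        have h := abs_sub_abs_le_abs_sub (((N : ℝ) + 1) * L) (-x)
        rw [abs_neg, sub_neg_eq_add, abs_of_pos (by positivity), 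
          show (((N : ℝ) + 1) * L + x) = x + ((N : ℝ) + 1) * L by ring] at h
        nlinarith [Nat.cast_nonneg (α := ℝ) N]
      · have g1 : Filter.Tendsto (fun N : ℕ => (N : ℝ) * L) Filter.atTop Filter.atTop :=
          (tendsto_natCast_atTop_atTop (R := ℝ)).atTop_mul_const hL0
        exact (Filter.tendsto_atTop_add_const_right _ (-|x|) g1).congr fun N => by ring
    have hyb : Filter.Tendsto (fun N : ℕ => |x - (N : ℝ) * L|) Filter.atTop Filter.atTop := by
      apply Filter.tendsto_atTop_mono (f := fun N : ℕ => (N : ℝ) * L - |x|)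
      · intro N
        have h := abs_sub_abs_le_abs_sub ((N : ℝ) * L) x
        rw [abs_of_nonneg (by positivity), abs_sub_comm] at h
        linarith
      · have g1 : Filter.Tendsto (fun N : ℕ => (N : ℝ) * L) Filter.atTop Filter.atTop :=
          (tendsto_natCast_atTop_atTop (R := ℝ)).atTop_mul_const hL0
        exact (Filter.tendsto_atTop_add_const_right _ (-|x|) g1).congr fun N => by ring
    have hTa : Filter.Tendsto (fun N : ℕ => a (N + 1)) Filter.atTop (nhds 0) := by
      refine (tendsto_log_ernst0 M ρ hM (fun N => x + ((N : ℝ) + 1) * L) hya).congr fun N => ?_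
      simp only [ha]
      push_cast
      ring_nf
    have hTb : Filter.Tendsto (fun N : ℕ => b N) Filter.atTop (nhds 0) := by
      refine (tendsto_log_ernst0 M ρ hM (fun N => x - (N : ℝ) * L) hyb).congr fun N => ?_
      simp only [hb]
    have htel : Filter.Tendsto (fun N : ℕ => ∑ n ∈ Finset.range N, (f n - f' n))
        Filter.atTop (nhds (a 1 - b 0)) := by
      have h := ((tendsto_const_nhds (x := a 1) (f := Filter.atTop (α := ℕ))).sub hTa).add
        (hTb.sub (tendsto_const_nhds (x := b 0)))
      rw [sub_zero, zero_sub, ← sub_eq_add_neg] at h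
      refine Filter.Tendsto.congr (fun N => (hps N).symm) ?_
      rw [show a 1 - b 0 = (a 1 - b 0) from rfl]
      exact h.congr fun N => by ring
    have heq : (∑' n, f n) - ∑' n, f' n = a 1 - b 0 :=
      tendsto_nhds_unique hdsum.tendsto_sum_nat htel
    have hProd : HasProd (fun n : ℕ =>
        ernst0 M (x + ((n : ℝ) + 1) * L) ρ * ernst0 M (x - ((n : ℝ) + 1) * L) ρ *
          Real.exp (4 * M / (((n : ℝ) + 1) * L))) (Real.exp (∑' n, f n)) := by
      have hfe : (Real.exp ∘ f) = (fun n : ℕ =>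
          ernst0 M (x + ((n : ℝ) + 1) * L) ρ * ernst0 M (x - ((n : ℝ) + 1) * L) ρ *
            Real.exp (4 * M / (((n : ℝ) + 1) * L))) := by
        funext n
        show Real.exp (f n) = _
        simp only [hf, ha, hb]
        push_cast
        rw [Real.exp_add, Real.exp_add, Real.exp_log (posp n), Real.exp_log (posm n)]
      exact hfe ▸ hsf.hasSum.rexp
    have hProd' : HasProd (fun n : ℕ =>
        ernst0 M (x + L + ((n : ℝ) + 1) * L) ρ * ernst0 M (x + L - ((n : ℝ) + 1) * L) ρ *
          Real.exp (4 * M / (((n : ℝ) + 1) * L))) (Real.exp (∑' n, f' n)) := by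
      have hfe : (Real.exp ∘ f') = (fun n : ℕ =>
          ernst0 M (x + L + ((n : ℝ) + 1) * L) ρ * ernst0 M (x + L - ((n : ℝ) + 1) * L) ρ *
            Real.exp (4 * M / (((n : ℝ) + 1) * L))) := by
        funext n
        show Real.exp (f' n) = _
        simp only [hf', ha, hb]
        push_cast
        rw [Real.exp_add, Real.exp_add, Real.exp_log (posp2 n), Real.exp_log (posm0 n),
          show x + ((n : ℝ) + 2) * L = x + L + ((n : ℝ) + 1) * L by ring,
          show x - (n : ℝ) * L = x + L - ((n : ℝ) + 1) * L by ring]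
      exact hfe ▸ hsf'.hasSum.rexp
    have p1 : 0 < ernst0 M (x + L) ρ := by
      have := hpos 1
      rwa [show x + ((1 : ℤ) : ℝ) * L = x + L by push_cast; ring] at this
    have p0 : 0 < ernst0 M x ρ := by
      have := hpos 0
      rwa [show x + ((0 : ℤ) : ℝ) * L = x by push_cast; ring] at this
    show ernstPeriodic M L (x + L) ρ = ernstPeriodic M L x ρ
    unfold ernstPeriodic
    rw [hProd.tprod_eq, hProd'.tprod_eq, ← Real.exp_log p1, ← Real.exp_log p0,
      ← Real.exp_add, ← Real.exp_add]
    congr 1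
    have ha1 : a 1 = Real.log (ernst0 M (x + L) ρ) := by
      simp only [ha]
      norm_num
    have hb0 : b 0 = Real.log (ernst0 M x ρ) := by
      simp only [hb]
      norm_num
    linarith [heq, ha1, hb0]
end

section
/- With \(M>0\), \(L>2M\), and \({\cal E}\) the periodic Ernst potential defined by the infinite product \({\cal E}(x,\rho)={\cal E}_0(x,\rho)\prod_{n\ge1}{\cal E}_0(x+nL,\rho){\cal E}_0(x-nL,\rho)e^{4M/(nL)}\), one has \({\cal E}(x,\rho) > 0\) for all \((x,\rho)\) in the fundamental region \(\{-L/2\le x\le L/2,\ \rho\ge 0\}\) except on the horizon segment \(\{\rho=0,\ |x|\le M\}\), where \({\cal E}=0\). -/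
lemma abs_le_sqrt_aux (a ρ : ℝ) : |a| ≤ Real.sqrt (a ^ 2 + ρ ^ 2) := by
  rw [← Real.sqrt_sq_eq_abs]
  exact Real.sqrt_le_sqrt (by nlinarith [sq_nonneg ρ])

/-- Lower bound `exp(-(4M/(u-2M))) ≤ (u-2M)/(u+2M)` when `u > 2M`. -/
lemma frac_lower (M u : ℝ) (hM : 0 < M) (hu : 2 * M < u) :
    Real.exp (-(4 * M / (u - 2 * M))) ≤ (u - 2 * M) / (u + 2 * M) := by
  have h1 : 0 < u - 2 * M := by linarith
  have h2 : 0 < u + 2 * M := by linarith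
  have h3 := Real.add_one_le_exp (4 * M / (u - 2 * M))
  have key : (u + 2 * M) / (u - 2 * M) ≤ Real.exp (4 * M / (u - 2 * M)) := by
    have : (u + 2 * M) / (u - 2 * M) = 4 * M / (u - 2 * M) + 1 := by
      field_simp; ring
    rw [this]; exact h3
  rw [Real.exp_neg]
  rw [inv_le_iff_one_le_mul₀ (Real.exp_pos _)]
  rw [div_le_iff₀ h1] at key
  rw [div_mul_eq_mul_div, le_div_iff₀ h2]
  nlinarith

/-- `ernst0` is bounded below by an exponential when off the horizon. -/
lemma ernst0_exp_lower (M x ρ : ℝ) (hM : 0 < M)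
    (hu : 2 * M < Real.sqrt ((x - M) ^ 2 + ρ ^ 2) + Real.sqrt ((x + M) ^ 2 + ρ ^ 2)) :
    Real.exp (-(4 * M / (Real.sqrt ((x - M) ^ 2 + ρ ^ 2) +
      Real.sqrt ((x + M) ^ 2 + ρ ^ 2) - 2 * M))) ≤ ernst0 M x ρ := by
  exact frac_lower M _ hM hu

lemma u_ge_two_abs (M x ρ : ℝ) :
    2 * |x| ≤ Real.sqrt ((x - M) ^ 2 + ρ ^ 2) + Real.sqrt ((x + M) ^ 2 + ρ ^ 2) := by
  have h1 := abs_le_sqrt_aux (x - M) ρ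
  have h2 := abs_le_sqrt_aux (x + M) ρ
  have h3 : |2 * x| ≤ |x - M| + |x + M| := by
    calc |2 * x| = |(x - M) + (x + M)| := by ring_nf
      _ ≤ |x - M| + |x + M| := abs_add_le _ _
  have : 2 * |x| = |2 * x| := by rw [abs_mul]; simp
  linarith [abs_nonneg (2 * x)]

lemma sum_inv_sq_le (s : Finset ℕ) : ∑ n ∈ s, (1 : ℝ) / ((n : ℝ) + 1) ^ 2 ≤ 2 := by
  obtain ⟨N, hN⟩ := s.exists_nat_subset_range
  calc ∑ n ∈ s, (1 : ℝ) / ((n : ℝ) + 1) ^ 2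
      ≤ ∑ n ∈ Finset.range N, (1 : ℝ) / ((n : ℝ) + 1) ^ 2 := by
        apply Finset.sum_le_sum_of_subset_of_nonneg hN
        intro i _ _; positivity
    _ ≤ ∑ n ∈ Finset.range N, (2 / ((n : ℝ) + 1) - 2 / ((n : ℝ) + 1 + 1)) := by
        apply Finset.sum_le_sum
        intro i _
        have h1 : (0 : ℝ) < (i : ℝ) + 1 := by positivity
        have h2 : (0 : ℝ) < (i : ℝ) + 2 := by positivity
        rw [div_sub_div _ _ (ne_of_gt h1) (by positivity), div_le_div_iff₀ (by positivity) (by positivity)]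
        ring_nf
        nlinarith [sq_nonneg ((i : ℝ) + 1)]
    _ = 2 / ((0 : ℝ) + 1) - 2 / ((N : ℝ) + 1) := by
        have := Finset.sum_range_sub' (f := fun n : ℕ => 2 / ((n : ℝ) + 1)) N
        simpa using this
    _ ≤ 2 := by
        have : (0 : ℝ) ≤ 2 / ((N : ℝ) + 1) := by positivity
        simp only [zero_add, div_one]
        linarith

set_option maxHeartbeats 800000 in
/-- Theorem 2 of the paper: on the fundamental region `{|x| ≤ L/2, ρ ≥ 0}`, the
periodic Ernst potential is strictly positive away from the horizon segment
`{ρ = 0, |x| ≤ M}`, and vanishes on the horizon. -/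
theorem ernstPeriodic_positivity (M L : ℝ) (hM : 0 < M) (hL : 2 * M < L)
    (x ρ : ℝ) (hx : |x| ≤ L / 2) (hρ : 0 ≤ ρ) :
    (¬ (ρ = 0 ∧ |x| ≤ M) → 0 < ernstPeriodic M L x ρ) ∧
    ((ρ = 0 ∧ |x| ≤ M) → ernstPeriodic M L x ρ = 0) := by
  have hL0 : 0 < L := by linarith
  obtain ⟨f, hf⟩ : ∃ f : ℕ → ℝ, f = fun n : ℕ =>
      ernst0 M (x + ((n : ℝ) + 1) * L) ρ * ernst0 M (x - ((n : ℝ) + 1) * L) ρ *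
        Real.exp (4 * M / (((n : ℝ) + 1) * L)) := ⟨_, rfl⟩
  obtain ⟨C, hC⟩ : ∃ C : ℝ, C = 4 * M * (L / 2 + M) / (L * (L / 2 - M)) := ⟨_, rfl⟩
  have hC0 : 0 < C := by
    rw [hC]; apply div_pos (by nlinarith) (by nlinarith)
  -- each factor is bounded below by exp(-C/(n+1)^2)
  have hterm : ∀ n : ℕ, Real.exp (-(C / ((n : ℝ) + 1) ^ 2)) ≤ f n := by
    intro n
    obtain ⟨m, hm⟩ : ∃ m : ℝ, m = (n : ℝ) + 1 := ⟨_, rfl⟩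
    rw [← hm]
    have hm1 : 1 ≤ m := by rw [hm]; have : (0:ℝ) ≤ (n:ℝ) := Nat.cast_nonneg n; linarith
    have hm0 : 0 < m := by linarith
    -- bound on |x ± m L|
    have habs : ∀ y : ℝ, m * L - L / 2 ≤ |y| →
        Real.exp (-(2 * M / (m * L - L / 2 - M))) ≤ ernst0 M y ρ ∧
        2 * M < Real.sqrt ((y - M) ^ 2 + ρ ^ 2) + Real.sqrt ((y + M) ^ 2 + ρ ^ 2) := by
      intro y hy
      have hmc : 0 < m * L - L / 2 - M := by nlinarith
      have hu := u_ge_two_abs M y ρ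
      have huge : 2 * (m * L - L / 2) ≤ Real.sqrt ((y - M) ^ 2 + ρ ^ 2) +
          Real.sqrt ((y + M) ^ 2 + ρ ^ 2) := by nlinarith
      have hu2 : 2 * M < Real.sqrt ((y - M) ^ 2 + ρ ^ 2) +
          Real.sqrt ((y + M) ^ 2 + ρ ^ 2) := by nlinarith
      refine ⟨?_, hu2⟩
      refine le_trans ?_ (ernst0_exp_lower M y ρ hM hu2)
      apply Real.exp_le_exp.mpr
      rw [neg_le_neg_iff]
      have hden : 0 < Real.sqrt ((y - M) ^ 2 + ρ ^ 2) +
          Real.sqrt ((y + M) ^ 2 + ρ ^ 2) - 2 * M := by linarith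
      rw [div_le_div_iff₀ hden (by linarith)]
      nlinarith
    have h1 : m * L - L / 2 ≤ |x + m * L| := by
      have := abs_sub_abs_le_abs_sub (x + m * L) x
      have h2 : |x + m * L - x| = m * L := by
        simp [abs_of_nonneg (by positivity : (0:ℝ) ≤ m * L)]
      rw [abs_sub_comm] at this
      have := abs_abs_sub_abs_le_abs_sub (x + m * L) x
      -- use |x + mL| ≥ |mL| - |x|
      have h3 : |m * L| - |x| ≤ |x + m * L| := by
        have := abs_add_le (x + m * L) (-x)
        simp at this
        have h4 : |m * L| ≤ |x + m * L| + |x| := by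
          calc |m * L| = |(x + m * L) + (-x)| := by ring_nf
            _ ≤ |x + m * L| + |(-x)| := abs_add_le _ _
            _ = |x + m * L| + |x| := by rw [abs_neg]
        linarith
      have h5 : |m * L| = m * L := abs_of_nonneg (by positivity)
      linarith
    have h1' : m * L - L / 2 ≤ |x - m * L| := by
      have h3 : |m * L| - |x| ≤ |x - m * L| := by
        have h4 : |m * L| ≤ |x - m * L| + |x| := by
          calc |m * L| = |(m * L - x) + x| := by ring_nf
            _ ≤ |m * L - x| + |x| := abs_add_le _ _
            _ = |x - m * L| + |x| := by rw [abs_sub_comm]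
        linarith
      have h5 : |m * L| = m * L := abs_of_nonneg (by positivity)
      linarith
    obtain ⟨hp1, _⟩ := habs (x + m * L) h1
    obtain ⟨hp2, _⟩ := habs (x - m * L) h1'
    have hmc : 0 < m * L - L / 2 - M := by nlinarith
    have hexp1 : (0 : ℝ) < Real.exp (-(2 * M / (m * L - L / 2 - M))) := Real.exp_pos _
    have hstep : Real.exp (-(2 * M / (m * L - L / 2 - M))) *
        Real.exp (-(2 * M / (m * L - L / 2 - M))) *
        Real.exp (4 * M / (m * L)) ≤ f n := by
      have he1 : 0 ≤ ernst0 M (x + m * L) ρ := le_trans hexp1.le hp1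
      have he2 : 0 ≤ Real.exp (-(2 * M / (m * L - L / 2 - M))) := hexp1.le
      simp only [hf]
      rw [← hm]
      refine mul_le_mul (mul_le_mul hp1 hp2 he2 he1) le_rfl (Real.exp_pos _).le
        (mul_nonneg he1 (le_trans hexp1.le hp2))
    refine le_trans ?_ hstep
    rw [← Real.exp_add, ← Real.exp_add, Real.exp_le_exp]
    -- arithmetic: -C/m² ≤ -4M/(mL - L/2 - M) + 4M/(mL)
    have hmc : 0 < m * L - (L / 2 + M) := by nlinarith
    have hmLc : m * (L / 2 - M) ≤ m * L - (L / 2 + M) := by nlinarith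
    have hml : 0 < m * L := by positivity
    have key : C / m ^ 2 ≥ 4 * M / (m * L - (L / 2 + M)) - 4 * M / (m * L) := by
      have e1 : 4 * M / (m * L - (L / 2 + M)) - 4 * M / (m * L) =
          (4 * M * (m * L) - (m * L - (L / 2 + M)) * (4 * M)) / ((m * L - (L / 2 + M)) * (m * L)) :=
        div_sub_div _ _ hmc.ne' hml.ne'
      have e1' : 4 * M * (m * L) - (m * L - (L / 2 + M)) * (4 * M) = 4 * M * (L / 2 + M) := by ring
      rw [e1, e1', ge_iff_le, div_le_div_iff₀ (by positivity) (by positivity)]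
      have hCden : C * (L * (L / 2 - M)) = 4 * M * (L / 2 + M) := by
        rw [hC, div_mul_cancel₀]
        exact (by nlinarith : (0:ℝ) < L * (L / 2 - M)).ne'
      nlinarith [hCden, mul_le_mul_of_nonneg_left
        (mul_le_mul_of_nonneg_right hmLc hml.le) hC0.le]
    have e2 : m * L - L / 2 - M = m * L - (L / 2 + M) := by ring
    rw [e2]
    have e3 : 2 * M / (m * L - (L / 2 + M)) + 2 * M / (m * L - (L / 2 + M)) =
        4 * M / (m * L - (L / 2 + M)) := by
      rw [← add_div]; congr 1; ring
    linarith
  -- every partial product is ≥ exp(-2C)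
  have hpartial : ∀ s : Finset ℕ, Real.exp (-(2 * C)) ≤ ∏ n ∈ s, f n := by
    intro s
    calc Real.exp (-(2 * C)) ≤ Real.exp (∑ n ∈ s, -(C / ((n : ℝ) + 1) ^ 2)) := by
          apply Real.exp_le_exp.mpr
          rw [Finset.sum_neg_distrib]
          have := sum_inv_sq_le s
          have hsum : ∑ n ∈ s, C / ((n : ℝ) + 1) ^ 2 ≤ 2 * C := by
            calc ∑ n ∈ s, C / ((n : ℝ) + 1) ^ 2
                = C * ∑ n ∈ s, (1 : ℝ) / ((n : ℝ) + 1) ^ 2 := by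
                  rw [Finset.mul_sum]; congr 1; ext n; rw [mul_one_div]
              _ ≤ C * 2 := by
                  exact mul_le_mul_of_nonneg_left (sum_inv_sq_le s) hC0.le
              _ = 2 * C := by ring
          linarith
      _ = ∏ n ∈ s, Real.exp (-(C / ((n : ℝ) + 1) ^ 2)) := Real.exp_sum s _
      _ ≤ ∏ n ∈ s, f n := by
          apply Finset.prod_le_prod
          · intro i _; exact (Real.exp_pos _).le
          · intro i _; exact hterm i
  -- hence the infinite product is positive
  have hprod : 0 < ∏' n : ℕ, f n := by
    by_cases hmul : Multipliable f
    · have := hmul.hasProd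
      have hge : Real.exp (-(2 * C)) ≤ ∏' n : ℕ, f n :=
        ge_of_tendsto' this hpartial
      exact lt_of_lt_of_le (Real.exp_pos _) hge
    · rw [tprod_eq_one_of_not_multipliable hmul]; exact one_pos
  constructor
  · intro h
    have hx' : ρ ≠ 0 ∨ M < |x| := by
      by_contra hc
      push_neg at hc
      exact h ⟨hc.1, hc.2⟩
    have hu2 : 2 * M < Real.sqrt ((x - M) ^ 2 + ρ ^ 2) + Real.sqrt ((x + M) ^ 2 + ρ ^ 2) := by
      rcases hx' with hρ0 | hxM
      · have hρpos : 0 < ρ := lt_of_le_of_ne hρ (Ne.symm hρ0)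
        have h1 : |x - M| < Real.sqrt ((x - M) ^ 2 + ρ ^ 2) := by
          rw [← Real.sqrt_sq_eq_abs]
          exact Real.sqrt_lt_sqrt (sq_nonneg _) (by nlinarith)
        have h2 : |x + M| < Real.sqrt ((x + M) ^ 2 + ρ ^ 2) := by
          rw [← Real.sqrt_sq_eq_abs]
          exact Real.sqrt_lt_sqrt (sq_nonneg _) (by nlinarith)
        have h3 : 2 * M ≤ |x - M| + |x + M| := by
          calc 2 * M = |2 * M| := (abs_of_pos (by linarith)).symm
            _ = |(x + M) - (x - M)| := by ring_nf
            _ ≤ |x + M| + |x - M| := abs_sub _ _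
            _ = |x - M| + |x + M| := by ring
        linarith
      · have := u_ge_two_abs M x ρ
        linarith
    have he0 : 0 < ernst0 M x ρ := by
      unfold ernst0
      apply div_pos (by linarith) (by linarith)
    rw [hf] at hprod
    unfold ernstPeriodic
    exact mul_pos he0 hprod
  · rintro ⟨hρ0, hxM⟩
    have hx1 : -M ≤ x := by rw [abs_le] at hxM; exact hxM.1
    have hx2 : x ≤ M := by rw [abs_le] at hxM; exact hxM.2
    have h1 : Real.sqrt ((x - M) ^ 2 + ρ ^ 2) = M - x := by
      rw [hρ0]
      simp only [ne_eq, OfNat.ofNat_ne_zero, not_false_eq_true, zero_pow, add_zero]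
      rw [Real.sqrt_sq_eq_abs, abs_of_nonpos (by linarith)]
      ring
    have h2 : Real.sqrt ((x + M) ^ 2 + ρ ^ 2) = x + M := by
      rw [hρ0]
      simp only [ne_eq, OfNat.ofNat_ne_zero, not_false_eq_true, zero_pow, add_zero]
      rw [Real.sqrt_sq_eq_abs, abs_of_nonneg (by linarith)]
    unfold ernstPeriodic ernst0
    rw [h1, h2]
    have : M - x + (x + M) - 2 * M = 0 := by ring
    rw [this, zero_div, zero_mul]
end

section
/- Let \(M>0\), \(L>2M\), and let \({\cal E}(x,0)\) denote the boundary value on the axis, for \(M\le |x|\le L/2\), of the periodic Ernst potential \({\cal E}(x,\rho)={\cal E}_0(x,\rho)\prod_{n\ge1}{\cal E}_0(x+nL,\rho){\cal E}_0(x-nL,\rho)e^{4M/(nL)}\). Then \({\cal E}(x,0)=e^{4\gamma M/L}\,\frac{\Gamma\left(\frac{|x|+M}{L}\right)\Gamma\left(1-\frac{|x|-M}{L}\right)}{\Gamma\left(\frac{|x|-M}{L}\right)\Gamma\left(1-\frac{|x|+M}{L}\right)}\), where \(\gamma\) is the Euler-Mascheroni constant. -/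
open Real Filter Finset Topology

lemma ernst0_axis {M : ℝ} (hM : 0 < M) (y : ℝ) (hy : M ≤ |y|) :
    ernst0 M y 0 = (|y| - M) / (|y| + M) := by
  have habs : |y - M| + |y + M| = 2 * |y| := by
    rcases le_total 0 y with h | h
    · rw [abs_of_nonneg h] at hy ⊢
      rw [abs_of_nonneg (by linarith), abs_of_nonneg (by linarith)]; ring
    · rw [abs_of_nonpos h] at hy ⊢
      rw [abs_of_nonpos (by linarith), abs_of_nonpos (by linarith)]; ring
  have hya : 0 < |y| := lt_of_lt_of_le hM hy
  unfold ernst0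
  rw [show ((0:ℝ)) ^ 2 = 0 by norm_num, add_zero, add_zero,
    Real.sqrt_sq_eq_abs, Real.sqrt_sq_eq_abs, habs]
  rw [div_eq_div_iff (by linarith) (by linarith)]
  ring

lemma abs4 (a b c d : ℝ) : |a - b + c - d| ≤ |a| + |b| + |c| + |d| := by
  have h1 : |a - b| ≤ |a| + |b| := by
    simpa [sub_eq_add_neg, abs_neg] using abs_add_le a (-b)
  have h2 : |a - b + c| ≤ |a - b| + |c| := abs_add_le _ _
  have h3 : |a - b + c - d| ≤ |a - b + c| + |d| := by
    simpa [sub_eq_add_neg, abs_neg] using abs_add_le (a - b + c) (-d)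
  linarith

lemma phi_bound {t : ℝ} (ht : |t| < 1) : |t + Real.log (1 - t)| ≤ |t| ^ 2 / (1 - |t|) := by
  have := Real.abs_log_sub_add_sum_range_le ht 1
  simpa [Finset.sum_range_one] using this


lemma log_term_bound {s : ℝ} (hs0 : 0 ≤ s) (hs1 : s < 1) (n : ℝ) (hn : 1 ≤ n) :
    |s / n + Real.log (1 - s / n)| ≤ s ^ 2 / (1 - s) * (1 / n ^ 2) ∧
    |-(s / n) + Real.log (1 + s / n)| ≤ s ^ 2 / (1 - s) * (1 / n ^ 2) := by
  have hn0 : (0:ℝ) < n := lt_of_lt_of_le one_pos hn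
  have h1 : s / n ≤ s := div_le_self hs0 hn
  have h2 : 0 ≤ s / n := div_nonneg hs0 hn0.le
  have habs : |s / n| = s / n := abs_of_nonneg h2
  have hlt : |s / n| < 1 := by rw [habs]; linarith
  have hd1 : (0:ℝ) < (1 - s) * n ^ 2 := mul_pos (by linarith) (by positivity)
  have hd2 : (1 - s) * n ^ 2 ≤ n ^ 2 * (1 - s / n) := by
    have e : n ^ 2 * (1 - s / n) - (1 - s) * n ^ 2 = s * n * (n - 1) := by
      field_simp; ring
    nlinarith [e, mul_nonneg (mul_nonneg hs0 hn0.le) (by linarith : (0:ℝ) ≤ n - 1)]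
  have hbound : (s / n) ^ 2 / (1 - s / n) ≤ s ^ 2 / (1 - s) * (1 / n ^ 2) := by
    rw [div_pow, div_div, div_mul_div_comm, mul_one]
    gcongr
  constructor
  · refine le_trans ?_ hbound
    have := phi_bound hlt
    rwa [habs] at this
  · have hlt' : |(-(s / n))| < 1 := by rwa [abs_neg]
    have := phi_bound hlt'
    rw [abs_neg, habs, sub_neg_eq_add] at this
    rw [← habs] at hbound
    exact le_trans this (by rw [habs] at hbound; exact hbound)

lemma prod_identity {u v d : ℝ} (hu0 : 0 < u) (hu1 : u < 1) (hv0 : 0 < v) (hv1 : v < 1)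
    (hd : d = u - v) (N : ℕ) (hN : 1 ≤ N) :
    ∏ k ∈ Finset.range N, ((((k:ℝ) + 1 + v) / ((k:ℝ) + 1 + u)) *
        (((k:ℝ) + 1 - u) / ((k:ℝ) + 1 - v)) * Real.exp (2 * d / ((k:ℝ) + 1)))
    = (u / v) * ((Real.GammaSeq u N * Real.GammaSeq (1 - v) N) /
        (Real.GammaSeq v N * Real.GammaSeq (1 - u) N)) *
      (((N:ℝ) + 1 - v) / ((N:ℝ) + 1 - u)) *
      Real.exp (2 * d * ((∑ k ∈ Finset.range N, ((k:ℝ) + 1)⁻¹) - Real.log N)) := by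
  have hN0 : (0:ℝ) < N := by exact_mod_cast hN
  set S : ℝ := ∑ k ∈ Finset.range N, ((k:ℝ) + 1)⁻¹ with hS
  set Pu : ℝ := ∏ j ∈ Finset.range (N + 1), (u + (j:ℝ)) with hPu
  set Pv : ℝ := ∏ j ∈ Finset.range (N + 1), (v + (j:ℝ)) with hPv
  set P1u : ℝ := ∏ j ∈ Finset.range (N + 1), (1 - u + (j:ℝ)) with hP1u
  set P1v : ℝ := ∏ j ∈ Finset.range (N + 1), (1 - v + (j:ℝ)) with hP1v
  have hPu0 : 0 < Pu := Finset.prod_pos fun j _ => by positivity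
  have hPv0 : 0 < Pv := Finset.prod_pos fun j _ => by positivity
  have hP1u0 : 0 < P1u := Finset.prod_pos fun j _ => by
    have : (0:ℝ) ≤ (j:ℝ) := Nat.cast_nonneg j
    linarith
  have hP1v0 : 0 < P1v := Finset.prod_pos fun j _ => by
    have : (0:ℝ) ≤ (j:ℝ) := Nat.cast_nonneg j
    linarith
  have hXu0 : 0 < ∏ k ∈ Finset.range N, ((k:ℝ) + 1 + u) :=
    Finset.prod_pos fun j _ => by positivity
  have hYv0 : 0 < ∏ k ∈ Finset.range N, ((k:ℝ) + 1 - v) :=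
    Finset.prod_pos fun j _ => by
      have : (0:ℝ) ≤ (j:ℝ) := Nat.cast_nonneg j
      linarith
  have hNu : (0:ℝ) < (N:ℝ) + 1 - u := by linarith
  have hNv : (0:ℝ) < (N:ℝ) + 1 - v := by linarith
  -- split the product
  have e1 : ∏ k ∈ Finset.range N, ((((k:ℝ) + 1 + v) / ((k:ℝ) + 1 + u)) *
        (((k:ℝ) + 1 - u) / ((k:ℝ) + 1 - v)) * Real.exp (2 * d / ((k:ℝ) + 1)))
      = ((∏ k ∈ Finset.range N, ((k:ℝ) + 1 + v)) / (∏ k ∈ Finset.range N, ((k:ℝ) + 1 + u))) *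
        ((∏ k ∈ Finset.range N, ((k:ℝ) + 1 - u)) / (∏ k ∈ Finset.range N, ((k:ℝ) + 1 - v))) *
        Real.exp (2 * d * S) := by
    rw [Finset.prod_mul_distrib, Finset.prod_mul_distrib, Finset.prod_div_distrib,
      Finset.prod_div_distrib, ← Real.exp_sum]
    congr 1
    rw [hS, Finset.mul_sum]
    congr 1
  have hPveq : Pv = (∏ k ∈ Finset.range N, ((k:ℝ) + 1 + v)) * v := by
    rw [hPv, Finset.prod_range_succ']
    push_cast
    rw [add_zero]
    congr 1
    exact Finset.prod_congr rfl fun k _ => by ring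
  have hPueq : Pu = (∏ k ∈ Finset.range N, ((k:ℝ) + 1 + u)) * u := by
    rw [hPu, Finset.prod_range_succ']
    push_cast
    rw [add_zero]
    congr 1
    exact Finset.prod_congr rfl fun k _ => by ring
  have hP1ueq : P1u = (∏ k ∈ Finset.range N, ((k:ℝ) + 1 - u)) * ((N:ℝ) + 1 - u) := by
    rw [hP1u, Finset.prod_range_succ]
    push_cast
    rw [show (1 - u + (N:ℝ)) = (N:ℝ) + 1 - u by ring]
    congr 1
    exact Finset.prod_congr rfl fun k _ => by ring
  have hP1veq : P1v = (∏ k ∈ Finset.range N, ((k:ℝ) + 1 - v)) * ((N:ℝ) + 1 - v) := by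
    rw [hP1v, Finset.prod_range_succ]
    push_cast
    rw [show (1 - v + (N:ℝ)) = (N:ℝ) + 1 - v by ring]
    congr 1
    exact Finset.prod_congr rfl fun k _ => by ring
  have eA : (∏ k ∈ Finset.range N, ((k:ℝ) + 1 + v)) / (∏ k ∈ Finset.range N, ((k:ℝ) + 1 + u))
      = (u / v) * (Pv / Pu) := by
    rw [hPveq, hPueq]
    field_simp
  have eB : (∏ k ∈ Finset.range N, ((k:ℝ) + 1 - u)) / (∏ k ∈ Finset.range N, ((k:ℝ) + 1 - v))
      = (P1u / P1v) * (((N:ℝ) + 1 - v) / ((N:ℝ) + 1 - u)) := by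
    rw [hP1ueq, hP1veq]
    field_simp
  have hr : (N:ℝ) ^ u * (N:ℝ) ^ (1 - v) = (N:ℝ) ^ (2 * d) * ((N:ℝ) ^ v * (N:ℝ) ^ (1 - u)) := by
    rw [← Real.rpow_add hN0, ← Real.rpow_add hN0, ← Real.rpow_add hN0]
    congr 1
    rw [hd]; ring
  have eQ : (Real.GammaSeq u N * Real.GammaSeq (1 - v) N) /
        (Real.GammaSeq v N * Real.GammaSeq (1 - u) N)
      = (N:ℝ) ^ (2 * d) * ((Pv * P1u) / (Pu * P1v)) := by
    simp only [Real.GammaSeq, ← hPu, ← hPv, ← hP1u, ← hP1v]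
    have hf : (0:ℝ) < (N.factorial : ℝ) := by positivity
    field_simp
    linear_combination hr
  have eExp : (N:ℝ) ^ (2 * d) * Real.exp (2 * d * (S - Real.log N)) = Real.exp (2 * d * S) := by
    rw [Real.rpow_def_of_pos hN0, ← Real.exp_add]
    congr 1
    ring
  rw [e1, eA, eB, eQ, ← eExp]
  ring

lemma one_add_div_eq {p q w : ℝ} (h : 0 < w + (1 - p)) :
    1 + (p - q) / (w + (1 - p)) = (w + 1 - q) / (w + 1 - p) := by
  have h' : w + 1 - p ≠ 0 := by intro hc; rw [show w + (1 - p) = w + 1 - p by ring, hc] at h; exact lt_irrefl 0 h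
  field_simp
  ring

/-- The value of the periodic Ernst potential on the axis `ρ = 0`, for
`M ≤ |x| ≤ L/2`, in terms of Gamma functions:
`ℰ(x,0) = e^{4γM/L} Γ((|x|+M)/L) Γ(1-(|x|-M)/L) / (Γ((|x|-M)/L) Γ(1-(|x|+M)/L))`. -/
theorem ernstPeriodic_on_axis (M L : ℝ) (hM : 0 < M) (hL : 2 * M < L)
    (x : ℝ) (hx₁ : M ≤ |x|) (hx₂ : |x| ≤ L / 2) :
    ernstPeriodic M L x 0 =
      Real.exp (4 * Real.eulerMascheroniConstant * M / L) *
        (Real.Gamma ((|x| + M) / L) * Real.Gamma (1 - (|x| - M) / L)) /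
        (Real.Gamma ((|x| - M) / L) * Real.Gamma (1 - (|x| + M) / L)) := by
  have hL0 : 0 < L := by linarith
  set a := |x| with ha
  have ha0 : 0 ≤ a := abs_nonneg x
  set u := (a + M) / L with hu
  set v := (a - M) / L with hv
  have hu0 : 0 < u := div_pos (by linarith) hL0
  have hu1 : u < 1 := by rw [hu, div_lt_one hL0]; linarith
  have hv0 : 0 ≤ v := div_nonneg (by linarith) hL0.le
  have hv1 : v < 1 := by rw [hv, div_lt_one hL0]; linarith
  have hvu : v < u := by
    rw [hu, hv]; apply div_lt_div_of_pos_right (by linarith) hL0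
  set d := u - v with hd
  have hd2 : d = 2 * M / L := by rw [hd, hu, hv]; field_simp; ring
  have hd0 : 0 < d := by rw [hd]; linarith
  -- the per-term simplification
  set g : ℕ → ℝ := fun k =>
    (((k : ℝ) + 1 + v) / ((k : ℝ) + 1 + u)) * (((k : ℝ) + 1 - u) / ((k : ℝ) + 1 - v)) *
      Real.exp (2 * d / ((k : ℝ) + 1)) with hg
  have huL : u * L = a + M := by rw [hu]; field_simp
  have hvL : v * L = a - M := by rw [hv]; field_simp
  have hterm : ∀ k : ℕ,
      ernst0 M (x + ((k : ℝ) + 1) * L) 0 * ernst0 M (x - ((k : ℝ) + 1) * L) 0 *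
        Real.exp (4 * M / (((k : ℝ) + 1) * L)) = g k := by
    intro k
    set n : ℝ := (k : ℝ) + 1 with hn
    have hn1 : (1 : ℝ) ≤ n := by rw [hn]; exact_mod_cast Nat.le_add_left 1 k
    have hn0 : (0 : ℝ) < n := lt_of_lt_of_le one_pos hn1
    have hnL : L ≤ n * L := le_mul_of_one_le_left hL0.le hn1
    have h1 : 0 < n * L + a + M := by linarith
    have h2 : 0 < n * L - a + M := by linarith
    have h3 : 0 < n + u := by linarith
    have h4 : 0 < n - v := by linarith
    have f1 : (n * L + a - M) / (n * L + a + M) = (n + v) / (n + u) := by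
      rw [div_eq_div_iff h1.ne' h3.ne']
      linear_combination (n + v) * huL - (n + u) * hvL
    have f2 : (n * L - a - M) / (n * L - a + M) = (n - u) / (n - v) := by
      rw [div_eq_div_iff h2.ne' h4.ne']
      linear_combination (n - v) * huL - (n - u) * hvL
    have hexpeq : Real.exp (4 * M / (n * L)) = Real.exp (2 * d / n) := by
      congr 1; rw [hd2]; field_simp; ring
    have hgk : g k = ((n + v) / (n + u)) * ((n - u) / (n - v)) * Real.exp (2 * d / n) := rfl
    rcases le_total 0 x with hx0 | hx0
    · have hax : a = x := by rw [ha, abs_of_nonneg hx0]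
      have e1 : |x + n * L| = n * L + a := by
        rw [abs_of_nonneg (a := x + n * L) (by linarith), hax]; ring
      have e2 : |x - n * L| = n * L - a := by
        rw [abs_of_nonpos (a := x - n * L) (by linarith), hax]; ring
      rw [ernst0_axis hM (x + n * L) (by rw [e1]; linarith), 
        ernst0_axis hM (x - n * L) (by rw [e2]; linarith),
        e1, e2, hgk, hexpeq, f1, f2]
    · have hax : a = -x := by rw [ha, abs_of_nonpos hx0]
      have e1 : |x + n * L| = n * L - a := by
        rw [abs_of_nonneg (a := x + n * L) (by linarith), hax]; ring
      have e2 : |x - n * L| = n * L + a := by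
        rw [abs_of_nonpos (a := x - n * L) (by linarith), hax]; ring
      rw [ernst0_axis hM (x + n * L) (by rw [e1]; linarith), 
        ernst0_axis hM (x - n * L) (by rw [e2]; linarith),
        e1, e2, hgk, hexpeq, f1, f2]
      ring
  have htp : ernstPeriodic M L x 0 = ernst0 M x 0 * ∏' k, g k := by
    unfold ernstPeriodic
    congr 1
    exact tprod_congr hterm
  have hern : ernst0 M x 0 = (a - M) / (a + M) := ernst0_axis hM x hx₁
  rcases eq_or_lt_of_le hx₁ with hMa | hMa
  · -- degenerate case |x| = M : both sides vanish
    have hv' : v = 0 := by rw [hv, ← hMa]; simp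
    rw [htp, hern, ← hMa, sub_self, zero_div, zero_mul, hv', Real.Gamma_zero, zero_mul,
      div_zero]
  · have hv0' : 0 < v := div_pos (by linarith) hL0
    -- log of the k-th factor
    set h : ℕ → ℝ := fun k =>
      ((-(v / ((k : ℝ) + 1)) + Real.log (1 + v / ((k : ℝ) + 1)))
        - (-(u / ((k : ℝ) + 1)) + Real.log (1 + u / ((k : ℝ) + 1))))
        + ((u / ((k : ℝ) + 1) + Real.log (1 - u / ((k : ℝ) + 1)))
        - (v / ((k : ℝ) + 1) + Real.log (1 - v / ((k : ℝ) + 1)))) with hh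
    have hexp : ∀ k : ℕ, Real.exp (h k) = g k := by
      intro k
      set n : ℝ := (k : ℝ) + 1 with hn
      have hn1 : (1 : ℝ) ≤ n := by rw [hn]; exact_mod_cast Nat.le_add_left 1 k
      have hn0 : (0 : ℝ) < n := lt_of_lt_of_le one_pos hn1
      have hun : u / n ≤ u := div_le_self hu0.le hn1
      have hvn : v / n ≤ v := div_le_self hv0 hn1
      have p1 : (0:ℝ) < 1 + v / n := by positivity
      have p2 : (0:ℝ) < 1 + u / n := by positivity
      have p3 : (0:ℝ) < 1 - u / n := by linarith
      have p4 : (0:ℝ) < 1 - v / n := by linarith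
      have hgk : g k = ((n + v) / (n + u)) * ((n - u) / (n - v)) * Real.exp (2 * d / n) := rfl
      have hhk : h k = ((-(v / n) + Real.log (1 + v / n)) - (-(u / n) + Real.log (1 + u / n)))
        + ((u / n + Real.log (1 - u / n)) - (v / n + Real.log (1 - v / n))) := rfl
      rw [hgk, hhk, Real.exp_add, Real.exp_sub, Real.exp_sub, Real.exp_add, Real.exp_add,
        Real.exp_add, Real.exp_add, Real.exp_log p1, Real.exp_log p2, Real.exp_log p3,
        Real.exp_log p4]
      have hnu : ((0:ℝ)) < n + u := by linarith
      have hnv : ((0:ℝ)) < n - v := by linarith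
      have hfrac1 : (1 + v / n) / (1 + u / n) = (n + v) / (n + u) := by
        rw [div_eq_div_iff p2.ne' hnu.ne']
        field_simp
      have hfrac2 : (1 - u / n) / (1 - v / n) = (n - u) / (n - v) := by
        rw [div_eq_div_iff p4.ne' hnv.ne']
        field_simp
      have hexps : Real.exp (-(v/n)) * Real.exp (u/n) / (Real.exp (-(u/n)) * Real.exp (v/n))
          = Real.exp (2 * d / n) := by
        rw [← Real.exp_add, ← Real.exp_add, ← Real.exp_sub]
        congr 1
        rw [hd]; ring
      have step : ∀ (A B C D p q r s : ℝ), B ≠ 0 → q ≠ 0 → D ≠ 0 → s ≠ 0 →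
          A * p / (B * q) * (C * r / (D * s)) = p / q * (r / s) * (A * C / (B * D)) := by
        intros A B C D p q r s hB hq hD hs
        field_simp
      exact (step _ _ _ _ _ _ _ _ (Real.exp_ne_zero _) p2.ne' (Real.exp_ne_zero _)
        p4.ne').trans (by rw [hfrac1, hfrac2, hexps])
    have hbd := fun (s:ℝ) => log_term_bound (s := s)
    set C := 2 * (v ^ 2 / (1 - v) + u ^ 2 / (1 - u)) with hC
    have hhbound : ∀ k : ℕ, |h k| ≤ C * (1 / ((k:ℝ) + 1) ^ 2) := by
      intro k
      set n : ℝ := (k : ℝ) + 1 with hn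
      have hn1 : (1 : ℝ) ≤ n := by rw [hn]; exact_mod_cast Nat.le_add_left 1 k
      obtain ⟨bv1, bv2⟩ := hbd v hv0 hv1 n hn1
      obtain ⟨bu1, bu2⟩ := hbd u hu0.le hu1 n hn1
      have h4 := abs4 (-(v / n) + Real.log (1 + v / n)) (-(u / n) + Real.log (1 + u / n))
        (u / n + Real.log (1 - u / n)) (v / n + Real.log (1 - v / n))
      have hhk : h k = ((-(v / n) + Real.log (1 + v / n)) - (-(u / n) + Real.log (1 + u / n)))
        + ((u / n + Real.log (1 - u / n)) - (v / n + Real.log (1 - v / n))) := rfl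
      have hCC : C * (1 / n ^ 2) = v ^ 2 / (1 - v) * (1 / n ^ 2) + v ^ 2 / (1 - v) * (1 / n ^ 2)
          + (u ^ 2 / (1 - u) * (1 / n ^ 2) + u ^ 2 / (1 - u) * (1 / n ^ 2)) := by
        rw [hC]; ring
      rw [hhk, show ((-(v / n) + Real.log (1 + v / n)) - (-(u / n) + Real.log (1 + u / n)))
        + ((u / n + Real.log (1 - u / n)) - (v / n + Real.log (1 - v / n)))
        = (-(v / n) + Real.log (1 + v / n)) - (-(u / n) + Real.log (1 + u / n))
        + (u / n + Real.log (1 - u / n)) - (v / n + Real.log (1 - v / n)) by ring, hCC]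
      linarith
    have hCsum : Summable (fun k : ℕ => C * (1 / ((k:ℝ) + 1) ^ 2)) := by
      have h0 : Summable (fun n : ℕ => 1 / (n:ℝ) ^ 2) :=
        Real.summable_one_div_nat_pow.mpr one_lt_two
      have h1 : Summable (fun k : ℕ => 1 / ((k:ℝ) + 1) ^ 2) := by
        refine ((summable_nat_add_iff 1).mpr h0).congr fun k => ?_
        push_cast; ring
      exact h1.mul_left C
    have hSumh : Summable h :=
      (hCsum.of_nonneg_of_le (fun k => abs_nonneg _) hhbound).of_abs
    have hP : HasProd g (Real.exp (∑' k, h k)) := by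
      have := hSumh.hasSum.rexp
      rwa [show rexp ∘ h = g from funext hexp] at this
    have hprod : ∀ N : ℕ, 1 ≤ N → ∏ k ∈ Finset.range N, g k =
        (u / v) * ((Real.GammaSeq u N * Real.GammaSeq (1 - v) N) /
          (Real.GammaSeq v N * Real.GammaSeq (1 - u) N)) *
        (((N:ℝ) + 1 - v) / ((N:ℝ) + 1 - u)) *
        Real.exp (2 * d * ((∑ k ∈ Finset.range N, ((k:ℝ) + 1)⁻¹) - Real.log N)) := by
      intro N hN
      exact prod_identity hu0 hu1 hv0' hv1 hd N hN
    set G := Real.Gamma u * Real.Gamma (1 - v) / (Real.Gamma v * Real.Gamma (1 - u)) with hG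
    have hne : Real.Gamma v * Real.Gamma (1 - u) ≠ 0 :=
      (mul_pos (Real.Gamma_pos_of_pos hv0') (Real.Gamma_pos_of_pos (by linarith))).ne'
    have hQ : Tendsto (fun N : ℕ => Real.GammaSeq u N * Real.GammaSeq (1 - v) N /
        (Real.GammaSeq v N * Real.GammaSeq (1 - u) N)) atTop (𝓝 G) :=
      ((Real.GammaSeq_tendsto_Gamma u).mul (Real.GammaSeq_tendsto_Gamma (1 - v))).div
        ((Real.GammaSeq_tendsto_Gamma v).mul (Real.GammaSeq_tendsto_Gamma (1 - u))) hne
    have hcorr : Tendsto (fun N : ℕ => ((N:ℝ) + 1 - v) / ((N:ℝ) + 1 - u)) atTop (𝓝 1) := by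
      have h1 : Tendsto (fun N : ℕ => (N:ℝ) + (1 - u)) atTop atTop :=
        tendsto_atTop_add_const_right atTop (1 - u) tendsto_natCast_atTop_atTop
      have h2 : Tendsto (fun N : ℕ => (u - v) / ((N:ℝ) + (1 - u))) atTop (𝓝 0) :=
        Tendsto.div_atTop tendsto_const_nhds h1
      have h3 : Tendsto (fun N : ℕ => 1 + (u - v) / ((N:ℝ) + (1 - u))) atTop (𝓝 1) := by
        simpa using (tendsto_const_nhds (x := (1:ℝ)) (f := atTop)).add h2
      refine Tendsto.congr (fun N => ?_) h3
      have hNu : (0:ℝ) < (N:ℝ) + (1 - u) := by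
        have : (0:ℝ) ≤ (N:ℝ) := Nat.cast_nonneg N
        linarith
      exact one_add_div_eq hNu
    have hharm : Tendsto (fun N : ℕ => (∑ k ∈ Finset.range N, ((k:ℝ) + 1)⁻¹) - Real.log N)
        atTop (𝓝 Real.eulerMascheroniConstant) := by
      refine Real.tendsto_harmonic_sub_log.congr fun n => ?_
      congr 1
      rw [harmonic]
      push_cast
      rfl
    have hEx : Tendsto (fun N : ℕ => Real.exp (2 * d * ((∑ k ∈ Finset.range N, ((k:ℝ) + 1)⁻¹)
        - Real.log N))) atTop (𝓝 (Real.exp (2 * d * Real.eulerMascheroniConstant))) :=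
      (Real.continuous_exp.tendsto _).comp (hharm.const_mul (2 * d))
    have hlim : Tendsto (fun N : ℕ => ∏ k ∈ Finset.range N, g k) atTop
        (𝓝 (u / v * G * 1 * Real.exp (2 * d * Real.eulerMascheroniConstant))) := by
      refine Tendsto.congr' ?_ (((tendsto_const_nhds.mul hQ).mul hcorr).mul hEx)
      filter_upwards [eventually_ge_atTop 1] with N hN
      exact (hprod N hN).symm
    have heq : Real.exp (∑' k, h k) = u / v * G * 1 *
        Real.exp (2 * d * Real.eulerMascheroniConstant) :=
      tendsto_nhds_unique hP.tendsto_prod_nat hlim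
    have hval : (a - M) / (a + M) = v / u := by
      rw [← huL, ← hvL, mul_div_mul_right _ _ hL0.ne']
    have hcan : v / u * (u / v) = 1 := by
      rw [div_mul_div_comm, mul_comm v u, div_self (mul_pos hu0 hv0').ne']
    rw [htp, hern, hP.tprod_eq, heq, hval, mul_one, mul_div_assoc, ← hG,
      show 2 * d * Real.eulerMascheroniConstant = 4 * Real.eulerMascheroniConstant * M / L by
        rw [hd2]; ring]
    linear_combination G * Real.exp (4 * Real.eulerMascheroniConstant * M / L) * hcan
end

section
/- Let \(\omega\) be a \(C^2\) solution of the Euler-Darboux equation on \(\mathbb{R}\times(0,\infty)\) that is \(L\)-periodic in \(x\) (\(\omega(x+L,\rho)=\omega(x,\rho)\)), even in \(x\) (\(\omega(-x,\rho)=\omega(x,\rho)\)), and smooth up to \(\rho=0\) on \(\{\rho=0, M<|x|\le L/2\}\) for some \(0<M<L/2\), with \(\omega_\rho(x,0)=0\) there. If \(k\) is any \(C^1\) function on \(\mathbb{R}\times(0,\infty)\) with \(k_\rho = \frac{\rho}{4}(\omega_\rho^2-\omega_x^2)\) and \(k_x=\frac{\rho}{2}\omega_x\omega_\rho\), then \(k(x+L,\rho)=k(x,\rho)\)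 for all \((x,\rho)\) (assuming the line integral of the 1-form along \(\rho=0\) between singular points receives canceling contributions by the even symmetry). -/
noncomputable def pdx (ω : ℝ → ℝ → ℝ) (x ρ : ℝ) : ℝ := deriv (fun x' => ω x' ρ) x

noncomputable def pdρ (ω : ℝ → ℝ → ℝ) (x ρ : ℝ) : ℝ := deriv (fun ρ' => ω x ρ') ρ

def IsEulerDarboux (ω : ℝ → ℝ → ℝ) (U : Set (ℝ × ℝ)) : Prop :=
  ∀ p ∈ U, pdx (pdx ω) p.1 p.2 + (pdρ ω p.1 p.2) / p.2 + pdρ (pdρ ω) p.1 p.2 = 0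

/-- Theorem 3 of the paper: if `ω` is a C² solution of the Euler-Darboux equation on
`ℝ × (0,∞)`, `L`-periodic and even in `x`, smooth up to the axis on the segment
`{ρ = 0, M < |x| ≤ L/2}` with `ω_ρ(x,0) = 0` there, then any C¹ function `k` with
`k_ρ = (ρ/4)(ω_ρ² - ω_x²)` and `k_x = (ρ/2) ω_x ω_ρ` is itself `L`-periodic in `x`. -/
theorem conformal_factor_periodic (M L : ℝ) (hM : 0 < M) (hL : 2 * M < L)
    (ω : ℝ → ℝ → ℝ)
    (hC2 : ContDiffOn ℝ 2 (fun p : ℝ × ℝ => ω p.1 p.2)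
      ({p : ℝ × ℝ | 0 < p.2} ∪ {p : ℝ × ℝ | p.2 = 0 ∧ M < |p.1| ∧ |p.1| ≤ L / 2}))
    (hsol : IsEulerDarboux ω {p : ℝ × ℝ | 0 < p.2})
    (hper : ∀ x ρ : ℝ, ω (x + L) ρ = ω x ρ)
    (heven : ∀ x ρ : ℝ, ω (-x) ρ = ω x ρ)
    (haxis : ∀ x : ℝ, M < |x| → |x| ≤ L / 2 → pdρ ω x 0 = 0)
    (k : ℝ → ℝ → ℝ)
    (hkC1 : ContDiffOn ℝ 1 (fun p : ℝ × ℝ => k p.1 p.2) {p : ℝ × ℝ | 0 < p.2})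
    (hkρ : ∀ x ρ : ℝ, 0 < ρ →
      pdρ k x ρ = ρ / 4 * ((pdρ ω x ρ) ^ 2 - (pdx ω x ρ) ^ 2))
    (hkx : ∀ x ρ : ℝ, 0 < ρ → pdx k x ρ = ρ / 2 * (pdx ω x ρ) * (pdρ ω x ρ)) :
    ∀ x ρ : ℝ, 0 < ρ → k (x + L) ρ = k x ρ := by
  intro x ρ hρ
  -- differentiability of x ↦ k x ρ
  have hopen : IsOpen {p : ℝ × ℝ | 0 < p.2} := isOpen_lt continuous_const continuous_snd
  have hdiff : ∀ y : ℝ, DifferentiableAt ℝ (fun x' => k x' ρ) y := by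
    intro y
    have h1 : DifferentiableAt ℝ (fun p : ℝ × ℝ => k p.1 p.2) (y, ρ) := by
      have := (hkC1.differentiableOn one_ne_zero).differentiableAt
        (hopen.mem_nhds (show ((y,ρ) : ℝ × ℝ) ∈ {p : ℝ × ℝ | 0 < p.2} from hρ))
      exact this
    exact h1.comp (f := fun y : ℝ => ((y, ρ) : ℝ × ℝ)) y ((DifferentiableAt.prodMk differentiableAt_id (differentiableAt_const ρ)))
  -- periodicity of the partial derivatives of ω
  have hpx : ∀ y : ℝ, pdx ω (y + L) ρ = pdx ω y ρ := by
    intro y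
    have : (fun x' => ω (x' + L) ρ) = fun x' => ω x' ρ := funext fun x' => hper x' ρ
    calc pdx ω (y + L) ρ = deriv (fun x' => ω (x' + L) ρ) y :=
          (deriv_comp_add_const (fun x' => ω x' ρ) L y).symm
      _ = pdx ω y ρ := by rw [this]; rfl
  have hpρ : ∀ y : ℝ, pdρ ω (y + L) ρ = pdρ ω y ρ := by
    intro y
    unfold pdρ
    congr 1
    exact funext fun ρ' => hper y ρ'
  -- evenness of partial derivatives of ω
  have hex : ∀ y : ℝ, pdx ω (-y) ρ = -pdx ω y ρ := by
    intro y
    have h : (fun x' => ω (-x') ρ) = fun x' => ω x' ρ := funext fun x' => heven x' ρ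
    have := deriv_comp_neg (f := fun x' => ω x' ρ) (x := y)
    rw [h] at this
    unfold pdx
    linarith [this]
  have heρ : ∀ y : ℝ, pdρ ω (-y) ρ = pdρ ω y ρ := by
    intro y
    unfold pdρ
    congr 1
    exact funext fun ρ' => heven y ρ'
  -- k is even in x: the function h(y) = k y ρ - k (-y) ρ has zero derivative
  have hkeven : ∀ y : ℝ, k (-y) ρ = k y ρ := by
    intro y
    set h : ℝ → ℝ := fun y => k y ρ - k (-y) ρ with hh
    have hd : Differentiable ℝ h := fun z =>
      ((hdiff z).sub ((hdiff (-z)).comp z differentiable_neg.differentiableAt))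
    have hd0 : ∀ z : ℝ, deriv h z = 0 := by
      intro z
      have d1 : deriv (fun y => k (-y) ρ) z = -pdx k (-z) ρ :=
        deriv_comp_neg (f := fun y => k y ρ) (x := z)
      have : deriv h z = pdx k z ρ - deriv (fun y => k (-y) ρ) z := by
        rw [hh]
        exact deriv_sub (hdiff z) ((hdiff (-z)).comp z differentiable_neg.differentiableAt)
      rw [this, d1, hkx z ρ hρ, hkx (-z) ρ hρ, hex z, heρ z]
      ring
    have := is_const_of_deriv_eq_zero hd hd0 y 0
    simp [hh] at this
    linarith [this]
  -- k(x+L) - k(x) has zero derivative in x, hence constant; value at -L/2 is 0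
  set g : ℝ → ℝ := fun y => k (y + L) ρ - k y ρ with hg
  have hgd : Differentiable ℝ g := fun z =>
    (((hdiff (z + L)).comp (f := fun y : ℝ => y + L) z ((differentiable_id.add_const L)).differentiableAt).fun_sub (hdiff z))
  have hgd0 : ∀ z : ℝ, deriv g z = 0 := by
    intro z
    have d1 : deriv (fun y => k (y + L) ρ) z = pdx k (z + L) ρ :=
      deriv_comp_add_const (fun y => k y ρ) L z
    have : deriv g z = deriv (fun y => k (y + L) ρ) z - pdx k z ρ := by
      rw [hg]
      exact deriv_sub ((hdiff (z + L)).comp z ((differentiable_id.add_const L)).differentiableAt)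
        (hdiff z)
    rw [this, d1, hkx z ρ hρ, hkx (z + L) ρ hρ, hpx z, hpρ z]
    ring
  have hc := is_const_of_deriv_eq_zero hgd hgd0 x (-(L / 2))
  have hval : g (-(L / 2)) = 0 := by
    have : -(L / 2) + L = L / 2 := by ring
    simp only [hg, this]
    have := hkeven (L / 2)
    linarith [this]
  have : g x = 0 := hc.trans hval
  simpa [hg, sub_eq_zero] using this
end
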